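/- arXiv:2112.09923 — 4 statements merged into one kernel-verified Lean document; each statement's English description precedes it below -/
import Mathlib

section
/- Let λ = (λ_1,...,λ_n) be a composition of N and for each i let μ_i be a partition of λ_i, with μ^Σ the pointwise sum partition. For any standard tableaux T^{μ_i} ∈ Std(μ_i) (i = 1,...,n), the stacked filling T^Σ = stk(T^{μ_1},...,T^{μ_n}) is a standard tableau of shape μ^Σ: every element of {1,...,N} occurs exactly once among its entries, its entries strictly increase along each row, and its entries strictly increase down each column. -/
/-- A list of naturals is a partition: non-increasing with positive parts. -/
def IsPartitionL (μ : List ℕ) : Prop :=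
  μ.Pairwise (· ≥ ·) ∧ ∀ x ∈ μ, 0 < x

/-- A standard tableau of shape `μ` (a partition of `μ.sum`), given as a function on
0-indexed boxes `(r, c)` with `r < μ.length` and `c < μ.getD r 0`: the entries are exactly
`{1, ..., μ.sum}` each occurring once, strictly increasing along rows and down columns. -/
structure IsStdTableau (μ : List ℕ) (T : ℕ → ℕ → ℕ) : Prop where
  entry_mem : ∀ r c, r < μ.length → c < μ.getD r 0 → 1 ≤ T r c ∧ T r c ≤ μ.sum
  exists_box : ∀ a, 1 ≤ a → a ≤ μ.sum → ∃ r c, r < μ.length ∧ c < μ.getD r 0 ∧ T r c = a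
  inj : ∀ r c r' c', r < μ.length → c < μ.getD r 0 → r' < μ.length → c' < μ.getD r' 0 →
      T r c = T r' c' → r = r' ∧ c = c'
  row_lt : ∀ r c c', r < μ.length → c < c' → c' < μ.getD r 0 → T r c < T r c'
  col_lt : ∀ r r' c, r < r' → r' < μ.length → c < μ.getD r' 0 → T r c < T r' c

/-- `shift μ k = λ_0 + ... + λ_{k-1}` where `λ_l = (μ l).sum`. -/
def shift (μ : ℕ → List ℕ) (k : ℕ) : ℕ := ∑ l ∈ Finset.range k, (μ l).sum

/-- The maximal number of parts among `μ 0, ..., μ (n-1)`. -/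
def maxLen (n : ℕ) (μ : ℕ → List ℕ) : ℕ := (Finset.range n).sup fun k => (μ k).length

/-- The pointwise sum partition `μ^Σ`, with `j`-th part `Σ_{i<n} μ_{i,j}`. -/
def sumShape (n : ℕ) (μ : ℕ → List ℕ) : List ℕ :=
  List.ofFn fun r : Fin (maxLen n μ) => ∑ k ∈ Finset.range n, (μ k).getD (r : ℕ) 0

/-- Row `r` of the stacked filling: the concatenation over `k = 0, ..., n-1` of row `r`
of `T k`, with every entry of the `k`-th row increased by `λ_0 + ... + λ_{k-1}`. -/
def stkRow (n : ℕ) (μ : ℕ → List ℕ) (T : ℕ → ℕ → ℕ → ℕ) (r : ℕ) : List ℕ :=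
  ((List.range n).map fun k =>
    (List.range ((μ k).getD r 0)).map fun c => T k r c + shift μ k).flatten

/-- The entry of the stacked filling `stk (T 0, ..., T (n-1))` in box `(r, c)`. -/
def stkEntry (n : ℕ) (μ : ℕ → List ℕ) (T : ℕ → ℕ → ℕ → ℕ) (r c : ℕ) : ℕ :=
  (stkRow n μ T r).getD c 0

namespace StkAux

def Srow (μ : ℕ → List ℕ) (r k : ℕ) : ℕ := ∑ l ∈ Finset.range k, (μ l).getD r 0

lemma exists_interval (g : ℕ → ℕ) {n c : ℕ} (hc : c < ∑ l ∈ Finset.range n, g l) :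
    ∃ k < n, (∑ l ∈ Finset.range k, g l) ≤ c ∧ c < ∑ l ∈ Finset.range (k+1), g l := by
  induction n with
  | zero => simp at hc
  | succ n ih =>
    by_cases h : c < ∑ l ∈ Finset.range n, g l
    · obtain ⟨k, hk, h1, h2⟩ := ih h
      exact ⟨k, Nat.lt_succ_of_lt hk, h1, h2⟩
    · exact ⟨n, Nat.lt_succ_self n, Nat.le_of_not_lt h, hc⟩

lemma sum_range_mono (g : ℕ → ℕ) {k k' : ℕ} (h : k ≤ k') :
    (∑ l ∈ Finset.range k, g l) ≤ ∑ l ∈ Finset.range k', g l :=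
  Finset.sum_le_sum_of_subset (Finset.range_subset_range.2 h)

lemma stkRow_succ (n : ℕ) (μ : ℕ → List ℕ) (T : ℕ → ℕ → ℕ → ℕ) (r : ℕ) :
    stkRow (n+1) μ T r = stkRow n μ T r ++
      (List.range ((μ n).getD r 0)).map (fun c => T n r c + shift μ n) := by
  simp [stkRow, List.range_succ]

lemma length_stkRow (n : ℕ) (μ : ℕ → List ℕ) (T : ℕ → ℕ → ℕ → ℕ) (r : ℕ) :
    (stkRow n μ T r).length = Srow μ r n := by
  induction n with
  | zero => simp [stkRow, Srow]
  | succ n ih =>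
    rw [stkRow_succ, List.length_append, ih]
    simp [Srow, Finset.sum_range_succ]

lemma stkEntry_eq (n : ℕ) (μ : ℕ → List ℕ) (T : ℕ → ℕ → ℕ → ℕ) (r : ℕ) {k c : ℕ}
    (hk : k < n) (h1 : Srow μ r k ≤ c) (h2 : c < Srow μ r (k+1)) :
    stkEntry n μ T r c = T k r (c - Srow μ r k) + shift μ k := by
  induction n with
  | zero => omega
  | succ n ih =>
    rw [stkEntry, stkRow_succ]
    rcases Nat.lt_or_ge k n with h | h
    · rw [List.getD_append _ _ _ _ (by
        rw [length_stkRow]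
        exact lt_of_lt_of_le h2 (sum_range_mono _ h))]
      exact ih h
    · have hkn : k = n := by omega
      subst hkn
      rw [List.getD_append_right _ _ _ _ (by rw [length_stkRow]; exact h1),
        length_stkRow]
      have hlt : c - Srow μ r k < (μ k).getD r 0 := by
        have := h2
        simp only [Srow, Finset.sum_range_succ] at this h1 ⊢
        omega
      rw [List.getD_eq_getElem _ _ (by simpa using hlt)]
      simp

lemma pos_getD_lt_length {L : List ℕ} {r : ℕ} (h : 0 < L.getD r 0) : r < L.length := by
  by_contra hr
  rw [List.getD_eq_default _ _ (Nat.le_of_not_lt hr)] at h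
  omega

lemma getD_antitone {L : List ℕ} (hs : L.Pairwise (· ≥ ·)) {r r' : ℕ} (h : r ≤ r') :
    L.getD r' 0 ≤ L.getD r 0 := by
  rcases Nat.lt_or_ge r' L.length with h' | h'
  · have hr : r < L.length := lt_of_le_of_lt h h'
    rw [List.getD_eq_getElem _ _ h', List.getD_eq_getElem _ _ hr]
    rcases Nat.eq_or_lt_of_le h with rfl | hlt
    · exact le_refl _
    · exact hs.rel_get_of_lt (a := ⟨r, hr⟩) (b := ⟨r', h'⟩) hlt
  · rw [List.getD_eq_default _ _ h']
    exact Nat.zero_le _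

lemma length_sumShape (n : ℕ) (μ : ℕ → List ℕ) :
    (sumShape n μ).length = maxLen n μ := by simp [sumShape]

lemma getD_sumShape (n : ℕ) (μ : ℕ → List ℕ) {r : ℕ} (hr : r < maxLen n μ) :
    (sumShape n μ).getD r 0 = Srow μ r n := by
  rw [List.getD_eq_getElem _ _ (by simpa [length_sumShape] using hr)]
  simp [sumShape, Srow]

lemma lt_maxLen {n k r : ℕ} (μ : ℕ → List ℕ) (hk : k < n) (hr : r < (μ k).length) :
    r < maxLen n μ :=
  lt_of_lt_of_le hr (Finset.le_sup (f := fun k => (μ k).length) (Finset.mem_range.2 hk))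

lemma sum_getD_eq_sum {L : List ℕ} {m : ℕ} (h : L.length ≤ m) :
    (∑ r ∈ Finset.range m, L.getD r 0) = L.sum := by
  induction L generalizing m with
  | nil => simp
  | cons a t ih =>
    obtain ⟨m', rfl⟩ : ∃ m', m = m' + 1 := ⟨m - 1, by simp at h; omega⟩
    rw [Finset.sum_range_succ']
    simp only [List.getD_cons_succ, List.getD_cons_zero]
    rw [ih (by simpa using h)]
    simp [Nat.add_comm]

lemma sum_sumShape (n : ℕ) (μ : ℕ → List ℕ) :
    (sumShape n μ).sum = shift μ n := by
  have h1 : (sumShape n μ).sum = ∑ r ∈ Finset.range (maxLen n μ),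
      ∑ k ∈ Finset.range n, (μ k).getD r 0 := by
    rw [sumShape, List.sum_ofFn]
    exact Fin.sum_univ_eq_sum_range (fun r => ∑ k ∈ Finset.range n, (μ k).getD r 0) _
  rw [h1, Finset.sum_comm, shift]
  refine Finset.sum_congr rfl fun k hk => ?_
  exact sum_getD_eq_sum (Finset.sup_le_iff.1 (le_refl (maxLen n μ)) k hk)

/-- Bundled block decomposition of a box of the stacked filling. -/
lemma decomp (n : ℕ) (μ : ℕ → List ℕ) (T : ℕ → ℕ → ℕ → ℕ) {r c : ℕ}
    (hc : c < Srow μ r n) :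
    ∃ k < n, Srow μ r k ≤ c ∧ c - Srow μ r k < (μ k).getD r 0 ∧ r < (μ k).length ∧
      stkEntry n μ T r c = T k r (c - Srow μ r k) + shift μ k ∧
      Srow μ r (k+1) = Srow μ r k + (μ k).getD r 0 := by
  obtain ⟨k, hk, h1, h2⟩ := exists_interval _ hc
  have h1' : Srow μ r k ≤ c := h1
  have h2' : c < Srow μ r (k+1) := h2
  have hstep : Srow μ r (k+1) = Srow μ r k + (μ k).getD r 0 :=
    Finset.sum_range_succ _ _
  have hlt : c - Srow μ r k < (μ k).getD r 0 := by omega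
  exact ⟨k, hk, h1', hlt, pos_getD_lt_length (by omega),
    stkEntry_eq n μ T r hk h1' h2', hstep⟩

end StkAux

open StkAux in
/-- Let `λ = (λ_1,...,λ_n)` be a composition of `N` and for each `i` let
`μ i` be a partition of `λ_i`, with `μ^Σ` the pointwise sum partition. For any standard
tableaux `T i ∈ Std(μ i)`, the stacked filling `stk(T 0, ..., T (n-1))` is a standard
tableau of shape `μ^Σ`. -/
theorem stacked_filling_isStdTableau (N n : ℕ) (μ : ℕ → List ℕ) (T : ℕ → ℕ → ℕ → ℕ)
    (hN : ∑ i ∈ Finset.range n, (μ i).sum = N)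
    (hcomp : ∀ i < n, 0 < (μ i).sum)
    (hpart : ∀ i < n, IsPartitionL (μ i))
    (hstd : ∀ i < n, IsStdTableau (μ i) (T i)) :
    IsStdTableau (sumShape n μ) (stkEntry n μ T) := by
  clear hcomp
  have hshift : ∀ k, shift μ (k+1) = shift μ k + (μ k).sum := by
    intro k; simp [shift, Finset.sum_range_succ]
  have hshiftm : ∀ {k k' : ℕ}, k ≤ k' → shift μ k ≤ shift μ k' :=
    fun h => sum_range_mono _ h
  constructor
  · -- entry_mem
    intro r c hr hc
    rw [length_sumShape] at hr
    rw [getD_sumShape n μ hr] at hc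
    obtain ⟨k, hk, h1, h2, hrlen, heq, hstep⟩ := decomp n μ T hc
    obtain ⟨hT1, hT2⟩ := (hstd k hk).entry_mem r (c - Srow μ r k) hrlen h2
    rw [heq, sum_sumShape]
    constructor
    · omega
    · have := hshift k
      have : shift μ (k+1) ≤ shift μ n := hshiftm hk
      omega
  · -- exists_box
    intro a ha1 ha2
    rw [sum_sumShape] at ha2
    obtain ⟨k, hk, h1, h2⟩ := exists_interval (fun l => (μ l).sum)
      (show a - 1 < shift μ n by omega)
    have h1' : shift μ k ≤ a - 1 := h1
    have h2' : a - 1 < shift μ (k+1) := h2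
    have hsk := hshift k
    obtain ⟨r, c₀, hrlen, hc₀, hTe⟩ := (hstd k hk).exists_box (a - shift μ k)
      (by omega) (by omega)
    have hstep : Srow μ r (k+1) = Srow μ r k + (μ k).getD r 0 :=
      Finset.sum_range_succ _ _
    refine ⟨r, Srow μ r k + c₀, ?_, ?_, ?_⟩
    · rw [length_sumShape]; exact lt_maxLen μ hk hrlen
    · rw [getD_sumShape n μ (lt_maxLen μ hk hrlen)]
      have : Srow μ r (k+1) ≤ Srow μ r n := sum_range_mono _ hk
      omega
    · rw [stkEntry_eq n μ T r hk (Nat.le_add_right _ _) (by omega)]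
      rw [Nat.add_sub_cancel_left, hTe]
      omega
  · -- inj
    intro r c r' c' hr hc hr' hc' heq
    rw [length_sumShape] at hr hr'
    rw [getD_sumShape n μ hr] at hc
    rw [getD_sumShape n μ hr'] at hc'
    obtain ⟨k, hk, h1, h2, hrlen, he, hstep⟩ := decomp n μ T hc
    obtain ⟨k', hk', h1', h2', hrlen', he', hstep'⟩ := decomp n μ T hc'
    rw [he, he'] at heq
    have hb := ((hstd k hk).entry_mem r (c - Srow μ r k) hrlen h2)
    have hb' := ((hstd k' hk').entry_mem r' (c' - Srow μ r' k') hrlen' h2')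
    have hkk' : k = k' := by
      rcases Nat.lt_trichotomy k k' with h | h | h
      · have h3 : shift μ (k+1) ≤ shift μ k' := hshiftm h
        have := hshift k
        omega
      · exact h
      · have h3 : shift μ (k'+1) ≤ shift μ k := hshiftm h
        have := hshift k'
        omega
    subst hkk'
    have hTeq : T k r (c - Srow μ r k) = T k r' (c' - Srow μ r' k) := by omega
    obtain ⟨hre, hce⟩ := (hstd k hk).inj _ _ _ _ hrlen h2 hrlen' h2' hTeq
    subst hre
    exact ⟨rfl, by omega⟩
  · -- row_lt
    intro r c c' hr hcc' hc'
    rw [length_sumShape] at hr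
    rw [getD_sumShape n μ hr] at hc'
    obtain ⟨k', hk', h1', h2', hrlen', he', hstep'⟩ := decomp n μ T hc'
    obtain ⟨k, hk, h1, h2, hrlen, he, hstep⟩ := decomp n μ T (lt_trans hcc' hc')
    rw [he, he']
    have hkk' : k ≤ k' := by
      by_contra h
      have : Srow μ r (k'+1) ≤ Srow μ r k := sum_range_mono _ (by omega)
      omega
    rcases Nat.eq_or_lt_of_le hkk' with rfl | hlt
    · have := (hstd k hk).row_lt r (c - Srow μ r k) (c' - Srow μ r k) hrlen
        (by omega) h2'
      omega
    · have hb := ((hstd k hk).entry_mem r (c - Srow μ r k) hrlen h2).2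
      have hb' := ((hstd k' hk').entry_mem r (c' - Srow μ r k') hrlen' h2').1
      have h3 : shift μ (k+1) ≤ shift μ k' := hshiftm hlt
      have := hshift k
      omega
  · -- col_lt
    intro r r' c hrr' hr' hc
    rw [length_sumShape] at hr'
    rw [getD_sumShape n μ hr'] at hc
    obtain ⟨k', hk', h1', h2', hrlen', he', hstep'⟩ := decomp n μ T hc
    have hanti : ∀ l < n, (μ l).getD r' 0 ≤ (μ l).getD r 0 :=
      fun l hl => getD_antitone (hpart l hl).1 (Nat.le_of_lt hrr')
    have hSle : ∀ j ≤ n, Srow μ r' j ≤ Srow μ r j := by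
      intro j hj
      refine Finset.sum_le_sum fun l hl => hanti l ?_
      exact lt_of_lt_of_le (Finset.mem_range.1 hl) hj
    have hcr : c < Srow μ r n := lt_of_lt_of_le hc (hSle n (le_refl n))
    obtain ⟨k, hk, h1, h2, hrlen, he, hstep⟩ := decomp n μ T hcr
    rw [he, he']
    have hkk' : k ≤ k' := by
      by_contra h
      have hA : Srow μ r' (k'+1) ≤ Srow μ r (k'+1) := hSle (k'+1) (by omega)
      have hB : Srow μ r (k'+1) ≤ Srow μ r k := sum_range_mono _ (by omega)
      omega
    rcases Nat.eq_or_lt_of_le hkk' with rfl | hlt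
    · -- same block
      have hSk : Srow μ r' k ≤ Srow μ r k := hSle k (le_of_lt hk)
      have hc'le : c - Srow μ r k ≤ c - Srow μ r' k := by omega
      have hgetle : (μ k).getD r' 0 ≤ (μ k).getD r 0 := hanti k hk
      have hcol : T k r (c - Srow μ r' k) < T k r' (c - Srow μ r' k) :=
        (hstd k hk).col_lt r r' (c - Srow μ r' k) hrr' hrlen' h2'
      rcases Nat.eq_or_lt_of_le hc'le with hE | hE
      · rw [hE]; omega
      · have hrow : T k r (c - Srow μ r k) < T k r (c - Srow μ r' k) :=
          (hstd k hk).row_lt r _ _ hrlen hE (by omega)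
        omega
    · have hbb := ((hstd k hk).entry_mem r (c - Srow μ r k) hrlen h2).2
      have hbb' := ((hstd k' hk').entry_mem r' (c - Srow μ r' k') hrlen' h2').1
      have h3 : shift μ (k+1) ≤ shift μ k' := hshiftm hlt
      have := hshift k
      omega
end

section
/- Let 𝕜, V = V_1 ⊕ ... ⊕ V_n, W_j, e and e_0 be as in the context, and assume further that e is nilpotent with dim ker(e^p) = Σ_{j=1}^m min(p, μ^Σ_j) for all p ≥ 0 (i.e. e has Jordan type μ^Σ), and that for each k the restriction e_0|_{V_k} is nilpotent of Jordan type μ_k. Suppose that for each k, F^{(k)}_• is a full flag of V_k with e_0(F^{(k)}_d) ⊆ F^{(k)}_{d-1} for all d ≥ 1 and Φ(F^{(k)}_•) = σ^{(k)} with respect to e_0|_{V_k}, where σ^{(k)} ∈ Std(μ_k). If τ ∈ Std(μ^Σ) satisfies Φ(LS(F^{(1)}_•,...,F^{(n)}_•)) = τ with respect to e, then either τ = stk(σ^{(1)},...,σ^{(n)}) or stk(σ^{(1)},...,σ^{(n)}) < τ in the order on Std(μ^Σ). -/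
/-- The (0-indexed) column of the tableau `T` of shape `μ` containing the entry `a`. -/
noncomputable def colOf (μ : List ℕ) (T : ℕ → ℕ → ℕ) (a : ℕ) : ℕ :=
  sInf {c : ℕ | ∃ r, r < μ.length ∧ c < μ.getD r 0 ∧ T r c = a}

/-- Spaltenstein's total order on standard tableaux of shape `μ`: `σ < τ` iff for some
entry `i`, the column of `i` in `σ` is smaller than in `τ`, and every entry `j > i`
occupies the same column in `σ` and `τ`. -/
def TabLT (μ : List ℕ) (σ τ : ℕ → ℕ → ℕ) : Prop :=
  ∃ i, 1 ≤ i ∧ i ≤ μ.sum ∧ colOf μ σ i < colOf μ τ i ∧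
    ∀ j, i < j → j ≤ μ.sum → colOf μ σ j = colOf μ τ j

/-- The number of entries `a ∈ {1,...,i}` of the tableau `T` of shape `μ` lying in the
first `p` columns (0-indexed columns `c < p`). -/
noncomputable def entriesInCols (μ : List ℕ) (T : ℕ → ℕ → ℕ) (i p : ℕ) : ℕ :=
  Set.ncard {a : ℕ | 1 ≤ a ∧ a ≤ i ∧
    ∃ r c, r < μ.length ∧ c < μ.getD r 0 ∧ c < p ∧ T r c = a}

section LinearDefs

variable {𝕜 V : Type*} [Field 𝕜] [AddCommGroup V] [Module 𝕜 V]

/-- A full flag `0 = F 0 ⊂ F 1 ⊂ ... ⊂ F N = V` of an `N`-dimensional space. -/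
structure IsFullFlag (N : ℕ) (F : ℕ → Submodule 𝕜 V) : Prop where
  mono : Monotone F
  bot : F 0 = ⊥
  top : F N = ⊤
  dim : ∀ i ≤ N, Module.finrank 𝕜 ↥(F i) = i

/-- A full flag `0 = F 0 ⊂ F 1 ⊂ ... ⊂ F l = U` of an `l`-dimensional subspace `U ⊆ V`. -/
structure IsFlagOf (U : Submodule 𝕜 V) (l : ℕ) (F : ℕ → Submodule 𝕜 V) : Prop where
  mono : Monotone F
  le : ∀ d, F d ≤ U
  bot : F 0 = ⊥
  top : F l = U
  dim : ∀ d ≤ l, Module.finrank 𝕜 ↥(F d) = d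

/-- `V = V_0 ⊕ ... ⊕ V_{n-1}` is an internal direct sum decomposition with
`dim V_k = lam k`. -/
structure IsDecomp (n : ℕ) (lam : ℕ → ℕ) (Vsub : ℕ → Submodule 𝕜 V) : Prop where
  dim : ∀ k < n, Module.finrank 𝕜 ↥(Vsub k) = lam k
  indep : ∀ k < n, Disjoint (Vsub k) (∑ l ∈ (Finset.range n).erase k, Vsub l)
  total : ∑ k ∈ Finset.range n, Vsub k = ⊤

/-- Partial sums `lam 0 + ... + lam (k-1)`. -/
def pSum (lam : ℕ → ℕ) (k : ℕ) : ℕ := ∑ l ∈ Finset.range k, lam l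

/-- For `1 ≤ i`, the (0-indexed) index `j` of the block containing position `i`, i.e. the
largest `j ≤ n` with `lam 0 + ... + lam (j-1) < i`. -/
def LSidx (n : ℕ) (lam : ℕ → ℕ) (i : ℕ) : ℕ :=
  Nat.findGreatest (fun j => pSum lam j < i) n

/-- The Lusztig–Spaltenstein flag: `F̄ i = W_{j-1} + F j d` where `j = LSidx n lam i` is the
block containing position `i`, `W_{j-1} = V_0 + ... + V_{j-1}` and `d = i - (lam 0 + ... + lam (j-1))`. -/
def LSflag (n : ℕ) (lam : ℕ → ℕ) (Vsub : ℕ → Submodule 𝕜 V)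
    (F : ℕ → ℕ → Submodule 𝕜 V) (i : ℕ) : Submodule 𝕜 V :=
  (∑ k ∈ Finset.range (LSidx n lam i), Vsub k) +
    F (LSidx n lam i) (i - pSum lam (LSidx n lam i))

end LinearDefs



section SpaltensteinAux

open Finset Submodule Module


open Finset

/-- A downward-closed subset of `ℕ` (as a `Finset`) is an initial segment. -/
lemma dcFinset_eq_range (s : Finset ℕ) (hdc : ∀ r r', r ≤ r' → r' ∈ s → r ∈ s) :
    s = Finset.range s.card := by
  rcases s.eq_empty_or_nonempty with h | h
  · simp [h]
  · have hmax := s.max'_mem h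
    have hs : s = Finset.range (s.max' h + 1) := by
      apply Finset.ext
      intro r
      simp only [Finset.mem_range, Nat.lt_succ_iff]
      constructor
      · intro hr; exact s.le_max' r hr
      · intro hr; exact hdc r (s.max' h) hr hmax
    rw [hs] at *
    rw [Finset.card_range]

/-- Characterisation of membership below the cut for antitone predicates. -/
lemma antitone_filter_char (m p : ℕ) (C : ℕ → ℕ)
    (hC : ∀ r r', r ≤ r' → C r' ≤ C r) :
    ∀ r < m, (p < C r ↔ r < ((Finset.range m).filter (fun r => p < C r)).card) := by
  set s := (Finset.range m).filter (fun r => p < C r) with hs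
  have hdc : ∀ r r', r ≤ r' → r' ∈ s → r ∈ s := by
    intro r r' hrr' hr'
    simp only [hs, Finset.mem_filter, Finset.mem_range] at hr' ⊢
    exact ⟨lt_of_le_of_lt hrr' hr'.1, lt_of_lt_of_le hr'.2 (hC r r' hrr')⟩
  have := dcFinset_eq_range s hdc
  intro r hr
  constructor
  · intro hpr
    have : r ∈ s := by simp [hs, hr, hpr]
    rw [dcFinset_eq_range s hdc] at this
    simpa using this
  · intro hrc
    have : r ∈ s := by rw [dcFinset_eq_range s hdc]; simpa using hrc
    simp only [hs, Finset.mem_filter] at this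
    exact this.2

/-- Combinatorial splitting lemma (Lemma D): for antitone `A B : ℕ → ℕ`, any `p` can be
split as `a + b` such that truncated-subtraction sums behave subadditively. -/
lemma lemD (A B : ℕ → ℕ) (m p : ℕ)
    (hA : ∀ r r', r ≤ r' → A r' ≤ A r) (hB : ∀ r r', r ≤ r' → B r' ≤ B r) :
    ∃ a b, a + b = p ∧
      (∑ r ∈ range m, (A r - a)) + (∑ r ∈ range m, (B r - b)) ≤
        ∑ r ∈ range m, (A r + B r - p) := by
  rcases Nat.eq_zero_or_pos m with hm | hm
  · exact ⟨p, 0, by omega, by simp [hm]⟩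
  set t := ((Finset.range m).filter (fun r => p < A r + B r)).card with ht
  have hchar : ∀ r < m, (p < A r + B r ↔ r < t) := by
    intro r hr
    have := antitone_filter_char m p (fun r => A r + B r)
      (fun r r' h => Nat.add_le_add (hA r r' h) (hB r r' h)) r hr
    simpa [ht] using this
  have htm : t ≤ m := by
    rw [ht]; exact le_trans (Finset.card_filter_le _ _) (by simp)
  rcases Nat.eq_zero_or_pos t with ht0 | htpos
  · -- no row exceeds p
    have h0 : A 0 + B 0 ≤ p := by
      by_contra h
      have := (hchar 0 hm).mp (by omega)
      omega
    refine ⟨A 0, p - A 0, by omega, ?_⟩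
    have : ∀ r ∈ range m, (A r - A 0) + (B r - (p - A 0)) ≤ A r + B r - p := by
      intro r hr
      have h1 : A r ≤ A 0 := hA 0 r (Nat.zero_le r)
      have h2 : B r ≤ B 0 := hB 0 r (Nat.zero_le r)
      omega
    calc (∑ r ∈ range m, (A r - A 0)) + (∑ r ∈ range m, (B r - (p - A 0)))
        = ∑ r ∈ range m, ((A r - A 0) + (B r - (p - A 0))) := by rw [Finset.sum_add_distrib]
      _ ≤ ∑ r ∈ range m, (A r + B r - p) := Finset.sum_le_sum this
  · -- t ≥ 1
    set Bt := if h : t < m then B t else 0 with hBt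
    have hBtle : ∀ r, t ≤ r → r < m → B r ≤ Bt := by
      intro r h1 h2
      have : t < m := lt_of_le_of_lt h1 h2
      rw [hBt]; simp only [this, dif_pos]
      exact hB t r h1
    have hBrge : ∀ r, r < t → Bt ≤ B r := by
      intro r hrt
      rw [hBt]
      split
      · exact hB r t (le_of_lt hrt)
      · exact Nat.zero_le _
    have hAtBt : t < m → A t + Bt ≤ p := by
      intro h
      have : ¬ p < A t + B t := by
        intro hcon
        have := (hchar t h).mp hcon
        omega
      rw [hBt]; simp only [h, dif_pos]; omega
    have hrow : A (t-1) + B (t-1) > p := by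
      have h1 : t - 1 < m := by omega
      exact (hchar (t-1) h1).mpr (by omega)
    have hBtp : Bt ≤ p := by
      rcases Nat.lt_or_ge t m with h | h
      · have := hAtBt h; omega
      · rw [hBt]; simp only [Nat.not_lt.mpr h, dif_neg, not_lt]
        · exact Nat.zero_le _
    set a := min (A (t-1)) (p - Bt) with ha
    have hap : a ≤ p := by rw [ha]; omega
    refine ⟨a, p - a, by omega, ?_⟩
    have key : ∀ r ∈ range m, (A r - a) + (B r - (p - a)) ≤ A r + B r - p := by
      intro r hr
      rw [Finset.mem_range] at hr
      rcases Nat.lt_or_ge r t with hrt | hrt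
      · -- active row
        have h1 : A (t-1) ≤ A r := hA r (t-1) (by omega)
        have h2 : B (t-1) ≤ B r := hB r (t-1) (by omega)
        have h3 : Bt ≤ B r := hBrge r hrt
        have hBrb : p ≤ a + B r := by
          rw [ha]
          rcases le_total (A (t-1)) (p - Bt) with h | h
          · simp only [min_eq_left h]; omega
          · simp only [min_eq_right h]; omega
        omega
      · -- inactive row
        have hnot : ¬ p < A r + B r := fun hcon => by
          have := (hchar r hr).mp hcon; omega
        have htm' : t < m := lt_of_le_of_lt hrt hr
        have h4 : A t + Bt ≤ p := hAtBt htm'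
        have h5 : A r ≤ A t := hA t r hrt
        have h6 : A r ≤ a := by
          rw [ha]
          have h7 : A r ≤ A (t-1) := hA (t-1) r (by omega)
          omega
        have h8 : B r ≤ Bt := hBtle r hrt hr
        have h9 : a ≤ p - Bt := by rw [ha]; omega
        omega
    calc (∑ r ∈ range m, (A r - a)) + (∑ r ∈ range m, (B r - (p - a)))
        = ∑ r ∈ range m, ((A r - a) + (B r - (p - a))) := by rw [Finset.sum_add_distrib]
      _ ≤ ∑ r ∈ range m, (A r + B r - p) := Finset.sum_le_sum key


open Finset



/-! ### rows -/

def Mrow (μ : ℕ → List ℕ) (k r : ℕ) : ℕ := (μ k).getD r 0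
def Srow (μ : ℕ → List ℕ) (j r : ℕ) : ℕ := ∑ k ∈ Finset.range j, Mrow μ k r

lemma getD_anti (l : List ℕ) (hl : l.Pairwise (· ≥ ·)) {r r' : ℕ} (h : r ≤ r') :
    l.getD r' 0 ≤ l.getD r 0 := by
  rcases Nat.lt_or_ge r' l.length with h' | h'
  · have hr : r < l.length := lt_of_le_of_lt h h'
    rw [List.getD_eq_getElem l 0 h', List.getD_eq_getElem l 0 hr]
    rcases Nat.eq_or_lt_of_le h with rfl | hlt
    · exact le_refl _
    · exact List.pairwise_iff_get.mp hl ⟨r, hr⟩ ⟨r', h'⟩ hlt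
  · rw [List.getD_eq_default l 0 h']
    exact Nat.zero_le _

lemma getD_pos (l : List ℕ) (hl : ∀ x ∈ l, 0 < x) {r : ℕ} (h : r < l.length) :
    0 < l.getD r 0 := by
  rw [List.getD_eq_getElem l 0 h]
  exact hl _ (l.getElem_mem h)

lemma sum_eq_sum_getD (l : List ℕ) : ∀ L, l.length ≤ L →
    l.sum = ∑ r ∈ range L, l.getD r 0 := by
  induction l with
  | nil => intro L _; simp
  | cons a l ih =>
    intro L hL
    have hL1 : 1 ≤ L := by simp at hL; omega
    obtain ⟨L', rfl⟩ : ∃ L', L = L' + 1 := ⟨L - 1, by omega⟩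
    rw [Finset.sum_range_succ']
    simp only [List.getD_cons_succ, List.getD_cons_zero, List.sum_cons]
    rw [ih L' (by simp at hL; omega)]
    omega

section Blocks

variable (n : ℕ) (μ : ℕ → List ℕ)

lemma Mrow_anti (hpart : ∀ i < n, IsPartitionL (μ i)) {k : ℕ} (hk : k < n)
    {r r' : ℕ} (h : r ≤ r') : Mrow μ k r' ≤ Mrow μ k r :=
  getD_anti (μ k) (hpart k hk).1 h

lemma Srow_succ (j r : ℕ) : Srow μ (j+1) r = Srow μ j r + Mrow μ j r :=
  Finset.sum_range_succ _ j

lemma Srow_zero (r : ℕ) : Srow μ 0 r = 0 := by simp [Srow]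

lemma Srow_anti (hpart : ∀ i < n, IsPartitionL (μ i)) {j : ℕ} (hj : j ≤ n)
    {r r' : ℕ} (h : r ≤ r') : Srow μ j r' ≤ Srow μ j r := by
  apply Finset.sum_le_sum
  intro k hk
  rw [Finset.mem_range] at hk
  exact Mrow_anti n μ hpart (lt_of_lt_of_le hk hj) h

lemma Srow_mono (r : ℕ) {j j' : ℕ} (h : j ≤ j') : Srow μ j r ≤ Srow μ j' r :=
  Finset.sum_le_sum_of_subset (Finset.range_subset_range.mpr h)

lemma len_le_maxLen {k : ℕ} (hk : k < n) : (μ k).length ≤ maxLen n μ :=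
  Finset.le_sup (f := fun k => (μ k).length) (Finset.mem_range.mpr hk)

lemma lt_maxLen_iff (r : ℕ) : r < maxLen n μ ↔ ∃ k < n, r < (μ k).length := by
  rw [maxLen, Finset.lt_sup_iff]
  constructor
  · rintro ⟨k, hk, h⟩; exact ⟨k, Finset.mem_range.mp hk, h⟩
  · rintro ⟨k, hk, h⟩; exact ⟨k, Finset.mem_range.mpr hk, h⟩

lemma Srow_n_pos (hpart : ∀ i < n, IsPartitionL (μ i)) {r : ℕ} (hr : r < maxLen n μ) :
    0 < Srow μ n r := by
  obtain ⟨k, hk, hlen⟩ := (lt_maxLen_iff n μ r).mp hr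
  have h1 : 0 < Mrow μ k r := getD_pos (μ k) (hpart k hk).2 hlen
  have : Mrow μ k r ≤ Srow μ n r := Finset.single_le_sum (f := fun k => Mrow μ k r)
    (fun i _ => Nat.zero_le _) (Finset.mem_range.mpr hk)
  omega

lemma Mrow_eq_zero_of_ge_len {k r : ℕ} (h : (μ k).length ≤ r) : Mrow μ k r = 0 :=
  List.getD_eq_default _ _ h

variable (lam : ℕ → ℕ)

lemma lam_eq_sum_Mrow (hlam : ∀ k, lam k = (μ k).sum) {k : ℕ} (hk : k < n) :
    ∀ L, maxLen n μ ≤ L → lam k = ∑ r ∈ range L, Mrow μ k r := by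
  intro L hL
  rw [hlam k]
  exact sum_eq_sum_getD (μ k) L (le_trans (len_le_maxLen n μ hk) hL)

lemma pSum_eq_sum_Srow (hlam : ∀ k, lam k = (μ k).sum) {j : ℕ} (hj : j ≤ n) :
    pSum lam j = ∑ r ∈ range (maxLen n μ), Srow μ j r := by
  calc pSum lam j = ∑ k ∈ range j, ∑ r ∈ range (maxLen n μ), Mrow μ k r := by
        apply Finset.sum_congr rfl
        intro k hk
        rw [Finset.mem_range] at hk
        exact lam_eq_sum_Mrow n μ lam hlam (lt_of_lt_of_le hk hj) _ (le_refl _)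
    _ = ∑ r ∈ range (maxLen n μ), Srow μ j r := Finset.sum_comm

lemma shift_eq_pSum (hlam : ∀ k, lam k = (μ k).sum) (k : ℕ) : shift μ k = pSum lam k := by
  rw [shift, pSum]
  exact Finset.sum_congr rfl fun l _ => (hlam l).symm

lemma pSum_le {j j' : ℕ} (h : j ≤ j') : pSum lam j ≤ pSum lam j' :=
  Finset.sum_le_sum_of_subset (Finset.range_subset_range.mpr h)

lemma pSum_succ (j : ℕ) : pSum lam (j+1) = pSum lam j + lam j := Finset.sum_range_succ _ j

lemma pSum_lt (hpos : ∀ k < n, 0 < lam k) {j j' : ℕ} (h : j < j') (h' : j' ≤ n) :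
    pSum lam j < pSum lam j' := by
  have h1 : pSum lam (j+1) ≤ pSum lam j' := pSum_le lam h
  rw [pSum_succ] at h1
  have := hpos j (by omega)
  omega

lemma sumShape_length : (sumShape n μ).length = maxLen n μ := by
  simp [sumShape]

lemma sumShape_getD {r : ℕ} (hr : r < maxLen n μ) :
    (sumShape n μ).getD r 0 = Srow μ n r := by
  have hr' : r < (sumShape n μ).length := by rw [sumShape_length]; exact hr
  rw [List.getD_eq_getElem _ 0 hr']
  simp [sumShape, Srow, Mrow]

lemma sumShape_sum (hlam : ∀ k, lam k = (μ k).sum) : (sumShape n μ).sum = pSum lam n := by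
  rw [sum_eq_sum_getD (sumShape n μ) (maxLen n μ) (le_of_eq (sumShape_length n μ))]
  rw [pSum_eq_sum_Srow n μ lam hlam (le_refl n)]
  apply Finset.sum_congr rfl
  intro r hr
  exact sumShape_getD n μ (Finset.mem_range.mp hr)

/-- decomposition of a value `1 ≤ v ≤ pSum n` into block `k` and inner value. -/
lemma val_block (hpos : ∀ k < n, 0 < lam k) {v : ℕ} (h1 : 1 ≤ v) (h2 : v ≤ pSum lam n) :
    ∃ k < n, pSum lam k < v ∧ v ≤ pSum lam (k+1) := by
  classical
  set k := Nat.findGreatest (fun j => pSum lam j < v) n with hk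
  have hPk : pSum lam k < v := by
    rw [hk]
    exact Nat.findGreatest_spec (P := fun j => pSum lam j < v) (m := 0) (n := n)
      (Nat.zero_le n) (by simp [pSum]; omega)
  have hkle : k ≤ n := by
    rw [hk]; exact Nat.findGreatest_le (P := fun j => pSum lam j < v) n
  have hkn : k < n := by
    rcases Nat.lt_or_ge k n with h | h
    · exact h
    · exfalso
      have : k = n := le_antisymm hkle h
      rw [this] at hPk; omega
  refine ⟨k, hkn, hPk, ?_⟩
  by_contra hcon
  push_neg at hcon
  have hgr : ¬ pSum lam (k+1) < v := by
    have := Nat.findGreatest_is_greatest (P := fun j => pSum lam j < v) (n := n)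
      (k := k+1) (by omega) (by omega)
    simpa using this
  omega

lemma val_block_unique {k k' v : ℕ}
    (h1 : pSum lam k < v) (h2 : v ≤ pSum lam (k+1))
    (h1' : pSum lam k' < v) (h2' : v ≤ pSum lam (k'+1)) : k = k' := by
  by_contra hne
  rcases Nat.lt_or_ge k k' with h | h
  · have : pSum lam (k+1) ≤ pSum lam k' := pSum_le lam (by omega)
    omega
  · have h' : k' < k := by omega
    have : pSum lam (k'+1) ≤ pSum lam k := pSum_le lam (by omega)
    omega

lemma LSidx_eq (hpos : ∀ k < n, 0 < lam k) {j d : ℕ} (hj : j < n) (hd1 : 1 ≤ d)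
    (hd2 : d ≤ lam j) : LSidx n lam (pSum lam j + d) = j := by
  classical
  rw [LSidx]
  set v := pSum lam j + d with hv
  have hP : pSum lam j < v := by omega
  have h1 : j ≤ Nat.findGreatest (fun j' => pSum lam j' < v) n :=
    Nat.le_findGreatest (P := fun j' => pSum lam j' < v) (n := n) (by omega) hP
  have h2 : pSum lam (Nat.findGreatest (fun j' => pSum lam j' < v) n) < v :=
    Nat.findGreatest_spec (P := fun j' => pSum lam j' < v) (m := j) (n := n)
      (by omega) hP
  by_contra hne
  have hgt : j < Nat.findGreatest (fun j' => pSum lam j' < v) n := by omega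
  have hle : j + 1 ≤ Nat.findGreatest (fun j' => pSum lam j' < v) n := hgt
  have : pSum lam (j+1) ≤ pSum lam (Nat.findGreatest (fun j' => pSum lam j' < v) n) :=
    pSum_le lam hle
  rw [pSum_succ] at this
  omega

/-! ### column segments -/

lemma col_block (hr : True) {r c : ℕ} (hc : c < Srow μ n r) :
    ∃ k < n, Srow μ k r ≤ c ∧ c < Srow μ (k+1) r := by
  classical
  set k := Nat.findGreatest (fun j => Srow μ j r ≤ c) n with hk
  have hPk : Srow μ k r ≤ c := by
    rw [hk]
    exact Nat.findGreatest_spec (P := fun j => Srow μ j r ≤ c) (m := 0) (n := n)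
      (Nat.zero_le n) (by simp [Srow_zero])
  have hkle : k ≤ n := by
    rw [hk]; exact Nat.findGreatest_le (P := fun j => Srow μ j r ≤ c) n
  have hkn : k < n := by
    rcases Nat.lt_or_ge k n with h | h
    · exact h
    · exfalso
      have : k = n := le_antisymm hkle h
      rw [this] at hPk; omega
  refine ⟨k, hkn, hPk, ?_⟩
  by_contra hcon
  push_neg at hcon
  have hgr : ¬ Srow μ (k+1) r ≤ c := by
    have := Nat.findGreatest_is_greatest (P := fun j => Srow μ j r ≤ c) (n := n)
      (k := k+1) (by omega) (by omega)
    simpa using this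
  omega

lemma col_block_unique {k k' r c : ℕ}
    (h1 : Srow μ k r ≤ c) (h2 : c < Srow μ (k+1) r)
    (h1' : Srow μ k' r ≤ c) (h2' : c < Srow μ (k'+1) r) : k = k' := by
  by_contra hne
  rcases Nat.lt_or_ge k k' with h | h
  · have : Srow μ (k+1) r ≤ Srow μ k' r := Srow_mono μ r (by omega)
    omega
  · have h' : k' < k := by omega
    have : Srow μ (k'+1) r ≤ Srow μ k r := Srow_mono μ r (by omega)
    omega

/-! ### stacked entry computation -/

lemma stk_flat_getD (σT : ℕ → ℕ → ℕ → ℕ) (r : ℕ) :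
    ∀ (s k : ℕ), k + s = n → ∀ k' c, k ≤ k' → k' < n → c < Mrow μ k' r →
    ((((List.range' k s).map fun l =>
        (List.range (Mrow μ l r)).map fun c' => σT l r c' + shift μ l)).flatten).getD
      ((Srow μ k' r - Srow μ k r) + c) 0 = σT k' r c + shift μ k' := by
  intro s
  induction s with
  | zero => intro k hk k' c h1 h2 _; omega
  | succ s ih =>
    intro k hk k' c h1 h2 hc
    rw [List.range'_succ]
    rw [List.map_cons, List.flatten_cons]
    have hlen : ((List.range (Mrow μ k r)).map fun c' => σT k r c' + shift μ k).length
        = Mrow μ k r := by simp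
    rcases Nat.eq_or_lt_of_le h1 with rfl | hlt
    · have hoff : (Srow μ k r - Srow μ k r) + c = c := by omega
      rw [hoff]
      rw [List.getD_append _ _ _ _ (by rw [hlen]; exact hc)]
      have hc' : c < ((List.range (Mrow μ k r)).map
          fun c' => σT k r c' + shift μ k).length := by rw [hlen]; exact hc
      rw [List.getD_eq_getElem _ 0 hc']
      simp
    · have hSk : Srow μ k r + Mrow μ k r ≤ Srow μ k' r := by
        rw [← Srow_succ]
        exact Srow_mono μ r hlt
      have hoff : (Srow μ k' r - Srow μ k r) + c ≥ Mrow μ k r := by omega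
      rw [List.getD_append_right _ _ _ _ (by rw [hlen]; exact hoff)]
      rw [hlen]
      have harith : (Srow μ k' r - Srow μ k r) + c - Mrow μ k r
          = (Srow μ k' r - Srow μ (k+1) r) + c := by
        rw [Srow_succ]; omega
      rw [harith]
      exact ih (k+1) (by omega) k' c hlt h2 hc

lemma stkEntry_seg (σT : ℕ → ℕ → ℕ → ℕ) {k r c : ℕ} (hk : k < n)
    (h1 : Srow μ k r ≤ c) (h2 : c < Srow μ (k+1) r) :
    stkEntry n μ σT r c = σT k r (c - Srow μ k r) + shift μ k := by
  have hc : c - Srow μ k r < Mrow μ k r := by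
    have := Srow_succ μ k r; omega
  have := stk_flat_getD n μ σT r n 0 (by omega) k (c - Srow μ k r) (Nat.zero_le k) hk hc
  rw [Srow_zero] at this
  simp only [Nat.sub_zero] at this
  have harith : Srow μ k r + (c - Srow μ k r) = c := by omega
  rw [harith] at this
  rw [stkEntry, stkRow, List.range_eq_range']
  exact this

end Blocks


open Finset




/-! ### box sets -/

lemma filter_lt_card (M t : ℕ) : ((Finset.range M).filter (fun c => c < t)).card = min t M := by
  have : (Finset.range M).filter (fun c => c < t) = Finset.range (min t M) := by
    ext c; simp only [Finset.mem_filter, Finset.mem_range, Finset.mem_inter]; omega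
  rw [this, Finset.card_range]

def boxSet (L : ℕ) (W : ℕ → ℕ) (P : ℕ → ℕ → Prop) [∀ r c, Decidable (P r c)] :
    Finset (ℕ × ℕ) :=
  (Finset.range L).biUnion fun r => ((Finset.range (W r)).filter (P r)).image (Prod.mk r)

lemma mem_boxSet {L : ℕ} {W : ℕ → ℕ} {P : ℕ → ℕ → Prop} [∀ r c, Decidable (P r c)]
    {rc : ℕ × ℕ} : rc ∈ boxSet L W P ↔ rc.1 < L ∧ rc.2 < W rc.1 ∧ P rc.1 rc.2 := by
  obtain ⟨r, c⟩ := rc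
  simp only [boxSet, Finset.mem_biUnion, Finset.mem_image, Finset.mem_filter,
    Finset.mem_range]
  constructor
  · rintro ⟨r', hr', c', ⟨hc', hP⟩, heq⟩
    obtain ⟨rfl, rfl⟩ := Prod.mk.injEq .. ▸ And.intro (congrArg Prod.fst heq) (congrArg Prod.snd heq)
    exact ⟨hr', hc', hP⟩
  · rintro ⟨h1, h2, h3⟩
    exact ⟨r, h1, c, ⟨h2, h3⟩, rfl⟩

lemma card_boxSet (L : ℕ) (W : ℕ → ℕ) (P : ℕ → ℕ → Prop) [∀ r c, Decidable (P r c)] :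
    (boxSet L W P).card = ∑ r ∈ range L, ((Finset.range (W r)).filter (P r)).card := by
  rw [boxSet, Finset.card_biUnion]
  · apply Finset.sum_congr rfl
    intro r _
    exact Finset.card_image_of_injective _ (fun a b h => (Prod.mk.injEq ..).mp h |>.2)
  · intro x _ y _ hxy
    simp only [Finset.disjoint_left]
    intro rc h1 h2
    simp only [Finset.mem_image] at h1 h2
    obtain ⟨c1, _, rfl⟩ := h1
    obtain ⟨c2, _, heq⟩ := h2
    exact hxy ((Prod.mk.injEq ..).mp heq).1.symm

section Tableau

variable {ν : List ℕ} {T : ℕ → ℕ → ℕ}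

/-- The column of an entry given by an explicit box. -/
lemma colOf_box (hT : IsStdTableau ν T) {r c : ℕ} (hr : r < ν.length)
    (hc : c < ν.getD r 0) : colOf ν T (T r c) = c := by
  have hset : {c' : ℕ | ∃ r', r' < ν.length ∧ c' < ν.getD r' 0 ∧ T r' c' = T r c} = {c} := by
    ext c'
    simp only [Set.mem_setOf_eq, Set.mem_singleton_iff]
    constructor
    · rintro ⟨r', hr', hc', heq⟩
      exact (hT.inj r' c' r c hr' hc' hr hc heq).2
    · rintro rfl
      exact ⟨r, hr, hc, rfl⟩
  rw [colOf, hset]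
  exact csInf_singleton c

lemma colOf_entry (hT : IsStdTableau ν T) {a : ℕ} (h1 : 1 ≤ a) (h2 : a ≤ ν.sum) :
    ∃ r c, r < ν.length ∧ c < ν.getD r 0 ∧ T r c = a ∧ colOf ν T a = c := by
  obtain ⟨r, c, hr, hc, heq⟩ := hT.exists_box a h1 h2
  exact ⟨r, c, hr, hc, heq, heq ▸ colOf_box hT hr hc⟩

/-- Bridge : `entriesInCols` as a box count. -/
lemma entriesInCols_eq_card (hT : IsStdTableau ν T) (i p : ℕ) :
    entriesInCols ν T i p =
      (boxSet ν.length (fun r => ν.getD r 0) (fun r c => T r c ≤ i ∧ c < p)).card := by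
  classical
  have hset : {a : ℕ | 1 ≤ a ∧ a ≤ i ∧
      ∃ r c, r < ν.length ∧ c < ν.getD r 0 ∧ c < p ∧ T r c = a} =
      ↑((boxSet ν.length (fun r => ν.getD r 0) (fun r c => T r c ≤ i ∧ c < p)).image
        (fun rc => T rc.1 rc.2)) := by
    ext a
    simp only [Set.mem_setOf_eq, Finset.coe_image, Set.mem_image, Finset.mem_coe]
    constructor
    · rintro ⟨h1, h2, r, c, hr, hc, hp, heq⟩
      exact ⟨(r, c), mem_boxSet.mpr ⟨hr, hc, heq ▸ h2, hp⟩, heq⟩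
    · rintro ⟨⟨r, c⟩, hmem, heq⟩
      obtain ⟨hr, hc, hle, hp⟩ := mem_boxSet.mp hmem
      have := hT.entry_mem r c hr hc
      exact ⟨heq ▸ this.1, heq ▸ hle, r, c, hr, hc, hp, heq⟩
  rw [entriesInCols, hset, Set.ncard_coe_finset]
  apply Finset.card_image_of_injOn
  intro x hx y hy hxy
  obtain ⟨hx1, hx2, _⟩ := mem_boxSet.mp hx
  obtain ⟨hy1, hy2, _⟩ := mem_boxSet.mp hy
  have := hT.inj x.1 x.2 y.1 y.2 hx1 hx2 hy1 hy2 hxy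
  exact Prod.ext this.1 this.2

/-- row-sum form. -/
lemma entriesInCols_eq_sum (hT : IsStdTableau ν T) (i p : ℕ) :
    entriesInCols ν T i p = ∑ r ∈ range ν.length,
      ((Finset.range (ν.getD r 0)).filter (fun c => T r c ≤ i ∧ c < p)).card := by
  rw [entriesInCols_eq_card hT, card_boxSet]

/-- Top count: all boxes in the first `p` columns. -/
lemma entriesInCols_top (hT : IsStdTableau ν T) (p : ℕ) :
    entriesInCols ν T ν.sum p = ∑ r ∈ range ν.length, min p (ν.getD r 0) := by
  rw [entriesInCols_eq_sum hT]
  apply Finset.sum_congr rfl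
  intro r hr
  rw [Finset.mem_range] at hr
  have : (Finset.range (ν.getD r 0)).filter (fun c => T r c ≤ ν.sum ∧ c < p)
      = (Finset.range (ν.getD r 0)).filter (fun c => c < p) := by
    apply Finset.filter_congr
    intro c hc
    rw [Finset.mem_range] at hc
    simp only [and_iff_right_iff_imp, iff_iff_implies_and_implies]
    constructor
    · intro h; exact h.2
    · intro h; exact ⟨(hT.entry_mem r c hr hc).2, h⟩
  rw [this, filter_lt_card]

/-- Increment lemma. -/
lemma entriesInCols_succ (hT : IsStdTableau ν T) {r₀ c₀ : ℕ} (hr₀ : r₀ < ν.length)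
    (hc₀ : c₀ < ν.getD r₀ 0) (p : ℕ) :
    entriesInCols ν T (T r₀ c₀) p =
      entriesInCols ν T (T r₀ c₀ - 1) p + (if c₀ < p then 1 else 0) := by
  classical
  set a := T r₀ c₀ with ha
  have ha1 : 1 ≤ a := (hT.entry_mem r₀ c₀ hr₀ hc₀).1
  rw [entriesInCols_eq_sum hT, entriesInCols_eq_sum hT]
  have key : ∀ r ∈ range ν.length,
      ((Finset.range (ν.getD r 0)).filter (fun c => T r c ≤ a ∧ c < p)).card
      = ((Finset.range (ν.getD r 0)).filter (fun c => T r c ≤ a - 1 ∧ c < p)).card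
        + (if r = r₀ ∧ c₀ < p then 1 else 0) := by
    intro r hr
    rw [Finset.mem_range] at hr
    set f1 := (Finset.range (ν.getD r 0)).filter (fun c => T r c ≤ a ∧ c < p) with hf1
    set f2 := (Finset.range (ν.getD r 0)).filter (fun c => T r c ≤ a - 1 ∧ c < p) with hf2
    have hsub : f2 ⊆ f1 := by
      intro c hc
      simp only [hf1, hf2, Finset.mem_filter] at hc ⊢
      exact ⟨hc.1, by omega, hc.2.2⟩
    have hcard := Finset.card_sdiff_add_card_eq_card hsub
    have hdiff : f1 \ f2 = (Finset.range (ν.getD r 0)).filter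
        (fun c => T r c = a ∧ c < p) := by
      ext c
      simp only [hf1, hf2, Finset.mem_sdiff, Finset.mem_filter, Finset.mem_range]
      constructor
      · rintro ⟨⟨h1, h2, h3⟩, h4⟩
        refine ⟨h1, ?_, h3⟩
        by_contra hne
        exact h4 ⟨h1, by omega, h3⟩
      · rintro ⟨h1, h2, h3⟩
        exact ⟨⟨h1, by omega, h3⟩, fun hcon => by omega⟩
    have hdcard : (f1 \ f2).card = if r = r₀ ∧ c₀ < p then 1 else 0 := by
      rw [hdiff]
      split
      · next h =>
        have hp : c₀ < p := h.2
        have hreq : r = r₀ := h.1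
        subst hreq
        have : (Finset.range (ν.getD r 0)).filter (fun c => T r c = a ∧ c < p) = {c₀} := by
          ext c
          simp only [Finset.mem_filter, Finset.mem_range, Finset.mem_singleton]
          constructor
          · rintro ⟨h1, h2, h3⟩
            exact (hT.inj r c r c₀ hr h1 hr₀ hc₀ h2).2
          · rintro rfl
            exact ⟨hc₀, rfl, hp⟩
        rw [this]; rfl
      · next h =>
        have : (Finset.range (ν.getD r 0)).filter (fun c => T r c = a ∧ c < p) = ∅ := by
          ext c
          simp only [Finset.mem_filter, Finset.mem_range, Finset.notMem_empty, iff_false]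
          rintro ⟨h1, h2, h3⟩
          obtain ⟨rfl, rfl⟩ := hT.inj r c r₀ c₀ hr h1 hr₀ hc₀ h2
          exact h ⟨rfl, h3⟩
        rw [this]; rfl
    omega
  rw [Finset.sum_congr rfl key, Finset.sum_add_distrib]
  congr 1
  by_cases hp : c₀ < p
  · simp [hp, Finset.sum_ite_eq', hr₀]
  · simp [hp]

/-- Trivial: count at `i = 0` vanishes. -/
lemma entriesInCols_zero (hT : IsStdTableau ν T) (p : ℕ) :
    entriesInCols ν T 0 p = 0 := by
  rw [entriesInCols_eq_sum hT]
  apply Finset.sum_eq_zero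
  intro r hr
  rw [Finset.mem_range] at hr
  rw [Finset.card_eq_zero]
  ext c
  simp only [Finset.mem_filter, Finset.mem_range, Finset.notMem_empty, iff_false]
  rintro ⟨h1, h2, _⟩
  have := (hT.entry_mem r c hr h1).1
  omega

end Tableau


open Finset


section Tableau2

variable {ν : List ℕ} {S T : ℕ → ℕ → ℕ}

lemma rowcount (hT : IsStdTableau ν T)
    (hW : ∀ r r', r ≤ r' → ν.getD r' 0 ≤ ν.getD r 0)
    {r c : ℕ} (hr : r < ν.length) (hc : c < ν.getD r 0) :
    ((range ν.length).filter (fun r' => c < ν.getD r' 0 ∧ T r' c < T r c)).card = r := by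
  have : (range ν.length).filter (fun r' => c < ν.getD r' 0 ∧ T r' c < T r c)
      = range r := by
    ext r'
    simp only [Finset.mem_filter, Finset.mem_range]
    constructor
    · rintro ⟨h1, h2, h3⟩
      rcases lt_trichotomy r' r with h | h | h
      · exact h
      · subst h; omega
      · exfalso
        have := hT.col_lt r r' c h h1 h2
        omega
    · intro h
      have h1 : r' < ν.length := lt_of_lt_of_le h (le_of_lt hr)
      have h2 : c < ν.getD r' 0 := lt_of_lt_of_le hc (hW r' r (le_of_lt h))
      exact ⟨h1, h2, hT.col_lt r' r c h hr hc⟩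
  rw [this, Finset.card_range]

lemma tableau_eq_of_colOf_eq (hS : IsStdTableau ν S) (hT : IsStdTableau ν T)
    (hW : ∀ r r', r ≤ r' → ν.getD r' 0 ≤ ν.getD r 0)
    (h : ∀ a, 1 ≤ a → a ≤ ν.sum → colOf ν S a = colOf ν T a) :
    ∀ r c, r < ν.length → c < ν.getD r 0 → S r c = T r c := by
  classical
  intro r c hr hc
  set a := T r c with ha
  have ha1 : 1 ≤ a := (hT.entry_mem r c hr hc).1
  have ha2 : a ≤ ν.sum := (hT.entry_mem r c hr hc).2
  obtain ⟨r₂, c₂, hr₂, hc₂, heq₂, hcol₂⟩ := colOf_entry hS ha1 ha2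
  have hcolT : colOf ν T a = c := by rw [ha]; exact colOf_box hT hr hc
  have hc₂c : c₂ = c := by rw [← hcol₂, h a ha1 ha2, hcolT]
  subst hc₂c
  -- show r₂ = r by counting values below `a` in column `c₂`
  have hcntS := rowcount hS hW hr₂ hc₂
  have hcntT := rowcount hT hW hr hc
  simp only [heq₂] at hcntS
  simp only [← ha] at hcntT
  -- the two filters have the same cardinality, via equal value sets
  have hkey : ((range ν.length).filter (fun r' => c₂ < ν.getD r' 0 ∧ S r' c₂ < a)).card
      = ((range ν.length).filter (fun r' => c₂ < ν.getD r' 0 ∧ T r' c₂ < a)).card := by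
    have himS : ((range ν.length).filter (fun r' => c₂ < ν.getD r' 0 ∧ S r' c₂ < a)).image
        (fun r' => S r' c₂)
        = ((range ν.length).filter (fun r' => c₂ < ν.getD r' 0 ∧ T r' c₂ < a)).image
        (fun r' => T r' c₂) := by
      ext x
      simp only [Finset.mem_image, Finset.mem_filter, Finset.mem_range]
      constructor
      · rintro ⟨r', ⟨h1, h2, h3⟩, rfl⟩
        have hx1 : 1 ≤ S r' c₂ := (hS.entry_mem r' c₂ h1 h2).1
        have hx2 : S r' c₂ ≤ ν.sum := (hS.entry_mem r' c₂ h1 h2).2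
        have hcS : colOf ν S (S r' c₂) = c₂ := colOf_box hS h1 h2
        obtain ⟨r'', c'', h1'', h2'', heq'', hcol''⟩ := colOf_entry hT hx1 hx2
        have : c'' = c₂ := by rw [← hcol'', ← h _ hx1 hx2, hcS]
        subst this
        exact ⟨r'', ⟨h1'', h2'', by omega⟩, heq''⟩
      · rintro ⟨r', ⟨h1, h2, h3⟩, rfl⟩
        have hx1 : 1 ≤ T r' c₂ := (hT.entry_mem r' c₂ h1 h2).1
        have hx2 : T r' c₂ ≤ ν.sum := (hT.entry_mem r' c₂ h1 h2).2
        have hcT : colOf ν T (T r' c₂) = c₂ := colOf_box hT h1 h2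
        obtain ⟨r'', c'', h1'', h2'', heq'', hcol''⟩ := colOf_entry hS hx1 hx2
        have : c'' = c₂ := by rw [← hcol'', h _ hx1 hx2, hcT]
        subst this
        exact ⟨r'', ⟨h1'', h2'', by omega⟩, heq''⟩
    have hcS : ((range ν.length).filter (fun r' => c₂ < ν.getD r' 0 ∧ S r' c₂ < a)).card
        = (((range ν.length).filter (fun r' => c₂ < ν.getD r' 0 ∧ S r' c₂ < a)).image
          (fun r' => S r' c₂)).card := by
      rw [Finset.card_image_of_injOn]
      intro x hx y hy hxy
      simp only [Finset.mem_filter, Finset.mem_range, Finset.mem_coe] at hx hy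
      exact (hS.inj x c₂ y c₂ hx.1 hx.2.1 hy.1 hy.2.1 hxy).1
    have hcT : ((range ν.length).filter (fun r' => c₂ < ν.getD r' 0 ∧ T r' c₂ < a)).card
        = (((range ν.length).filter (fun r' => c₂ < ν.getD r' 0 ∧ T r' c₂ < a)).image
          (fun r' => T r' c₂)).card := by
      rw [Finset.card_image_of_injOn]
      intro x hx y hy hxy
      simp only [Finset.mem_filter, Finset.mem_range, Finset.mem_coe] at hx hy
      exact (hT.inj x c₂ y c₂ hx.1 hx.2.1 hy.1 hy.2.1 hxy).1
    rw [hcS, hcT, himS]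
  have : r₂ = r := by omega
  subst this
  exact heq₂

/-- downward induction on agreement above `i`. -/
lemma agree_above (hS : IsStdTableau ν S) (hT : IsStdTableau ν T)
    {i : ℕ} (hagree : ∀ a, i < a → a ≤ ν.sum → colOf ν S a = colOf ν T a) (p : ℕ) :
    ∀ k u, u + k = ν.sum → i ≤ u →
      entriesInCols ν S u p + entriesInCols ν T ν.sum p
        = entriesInCols ν T u p + entriesInCols ν S ν.sum p := by
  intro k
  induction k with
  | zero => intro u hu _; have : u = ν.sum := by omega
            subst this; omega
  | succ k ih =>
    intro u hu hiu
    have hih := ih (u+1) (by omega) (by omega)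
    have ha1 : 1 ≤ u + 1 := by omega
    have ha2 : u + 1 ≤ ν.sum := by omega
    obtain ⟨rS, cS, hrS, hcS, heqS, hcolS⟩ := colOf_entry hS ha1 ha2
    obtain ⟨rT, cT, hrT, hcT, heqT, hcolT⟩ := colOf_entry hT ha1 ha2
    have hcc : cS = cT := by
      rw [← hcolS, ← hcolT]; exact hagree (u+1) (by omega) ha2
    have hincS := entriesInCols_succ hS hrS hcS p
    have hincT := entriesInCols_succ hT hrT hcT p
    rw [heqS] at hincS
    rw [heqT] at hincT
    simp only [Nat.add_sub_cancel] at hincS hincT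
    rw [hcc] at hincS
    by_cases hp : cT < p <;> simp only [hp, if_true, if_false] at hincS hincT <;> omega

/-- The main combinatorial reduction. -/
lemma reduction (hS : IsStdTableau ν S) (hT : IsStdTableau ν T)
    (hW : ∀ r r', r ≤ r' → ν.getD r' 0 ≤ ν.getD r 0)
    (hstar : ∀ i, i ≤ ν.sum → ∀ p, entriesInCols ν S i p ≤ entriesInCols ν T i p) :
    (∀ r c, r < ν.length → c < ν.getD r 0 → T r c = S r c) ∨ TabLT ν S T := by
  classical
  set Dset := (Finset.Icc 1 ν.sum).filter (fun a => colOf ν S a ≠ colOf ν T a) with hD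
  rcases Dset.eq_empty_or_nonempty with hne | hne
  · left
    intro r c hr hc
    refine (tableau_eq_of_colOf_eq hS hT hW ?_ r c hr hc).symm
    intro a h1 h2
    by_contra hcon
    have : a ∈ Dset := by
      rw [hD]; simp only [Finset.mem_filter, Finset.mem_Icc]; exact ⟨⟨h1, h2⟩, hcon⟩
    rw [hne] at this
    exact absurd this (Finset.notMem_empty a)
  · right
    set i := Dset.max' hne with hi
    have himem : i ∈ Dset := Dset.max'_mem hne
    rw [hD] at himem
    simp only [Finset.mem_filter, Finset.mem_Icc] at himem
    obtain ⟨⟨hi1, hi2⟩, hine⟩ := himem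
    have hagree : ∀ a, i < a → a ≤ ν.sum → colOf ν S a = colOf ν T a := by
      intro a ha1 ha2
      by_contra hcon
      have : a ∈ Dset := by
        rw [hD]; simp only [Finset.mem_filter, Finset.mem_Icc]
        exact ⟨⟨by omega, ha2⟩, hcon⟩
      have := Dset.le_max' a this
      omega
    have heqi : ∀ p, entriesInCols ν S i p = entriesInCols ν T i p := by
      intro p
      have h1 := agree_above hS hT hagree p (ν.sum - i) i (by omega) (le_refl i)
      have h2 : entriesInCols ν S ν.sum p = entriesInCols ν T ν.sum p := by
        rw [entriesInCols_top hS, entriesInCols_top hT]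
      omega
    have hlt : colOf ν S i < colOf ν T i := by
      rcases lt_trichotomy (colOf ν S i) (colOf ν T i) with h | h | h
      · exact h
      · exact absurd h hine
      · exfalso
        set p := colOf ν T i + 1 with hp
        obtain ⟨rS, cS, hrS, hcS, heqS, hcolS⟩ := colOf_entry hS hi1 hi2
        obtain ⟨rT, cT, hrT, hcT, heqT, hcolT⟩ := colOf_entry hT hi1 hi2
        have hincS := entriesInCols_succ hS hrS hcS p
        have hincT := entriesInCols_succ hT hrT hcT p
        rw [heqS] at hincS
        rw [heqT] at hincT
        have hcSi : cS = colOf ν S i := hcolS.symm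
        have hcTi : cT = colOf ν T i := hcolT.symm
        have hpT : cT < p := by omega
        have hpS : ¬ cS < p := by omega
        simp only [hpT, hpS, if_true, if_false] at hincS hincT
        have hstar' := hstar (i-1) (by omega) p
        have heqip := heqi p
        omega
    exact ⟨i, hi1, hi2, hlt, hagree⟩

end Tableau2


open Finset

section Stk

variable (n : ℕ) (μ : ℕ → List ℕ) (lam : ℕ → ℕ) (σ : ℕ → ℕ → ℕ → ℕ)
variable (hpart : ∀ i < n, IsPartitionL (μ i))
variable (hlam : ∀ k, lam k = (μ k).sum)
variable (hpos : ∀ k < n, 0 < lam k)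
variable (hσ : ∀ k < n, IsStdTableau (μ k) (σ k))

/-- positivity of row length forces row validity -/
lemma row_valid {k r : ℕ} (h : 0 < Mrow μ k r) : r < (μ k).length := by
  by_contra hcon
  push_neg at hcon
  rw [Mrow_eq_zero_of_ge_len μ hcon] at h
  omega

include hlam in
lemma shift_succ' (k : ℕ) : shift μ (k+1) = shift μ k + lam k := by
  rw [shift, shift, Finset.sum_range_succ, hlam k]

include hlam in
lemma shift_mono' {k k' : ℕ} (h : k ≤ k') : shift μ k ≤ shift μ k' := by
  rw [shift_eq_pSum μ lam hlam, shift_eq_pSum μ lam hlam]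
  exact pSum_le lam h

include hpart hlam hpos hσ in
/-- The stacked filling is a standard tableau. -/
lemma stk_std : IsStdTableau (sumShape n μ) (stkEntry n μ σ) := by
  have hlen : (sumShape n μ).length = maxLen n μ := sumShape_length n μ
  have hget : ∀ r < maxLen n μ, (sumShape n μ).getD r 0 = Srow μ n r :=
    fun r hr => sumShape_getD n μ hr
  have hsum : (sumShape n μ).sum = pSum lam n := sumShape_sum n μ lam hlam
  have hseg : ∀ {r c : ℕ}, r < maxLen n μ → c < Srow μ n r →
      ∃ k < n, Srow μ k r ≤ c ∧ c < Srow μ (k+1) r ∧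
        stkEntry n μ σ r c = σ k r (c - Srow μ k r) + shift μ k ∧
        (c - Srow μ k r) < Mrow μ k r ∧ r < (μ k).length := by
    intro r c hr hc
    obtain ⟨k, hk, h1, h2⟩ := col_block n μ trivial hc
    have hcm : c - Srow μ k r < Mrow μ k r := by
      have := Srow_succ μ k r; omega
    exact ⟨k, hk, h1, h2, stkEntry_seg n μ σ hk h1 h2, hcm,
      row_valid μ (by omega)⟩
  constructor
  · -- entry_mem
    intro r c hr hc
    rw [hlen] at hr
    rw [hget r hr] at hc
    obtain ⟨k, hk, h1, h2, hval, hcm, hrk⟩ := hseg hr hc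
    have hmem := (hσ k hk).entry_mem r (c - Srow μ k r) hrk hcm
    rw [hval, hsum]
    have hs1 : shift μ (k+1) = shift μ k + lam k := shift_succ' μ lam hlam k
    have hs2 : shift μ (k+1) ≤ shift μ n := shift_mono' μ lam hlam (by omega)
    have hs3 : shift μ n = pSum lam n := shift_eq_pSum μ lam hlam n
    rw [← hlam k] at hmem
    omega
  · -- exists_box
    intro a ha1 ha2
    rw [hsum] at ha2
    obtain ⟨k, hk, h1, h2⟩ := val_block n lam hpos ha1 ha2
    set d' := a - pSum lam k with hd'
    have hd'1 : 1 ≤ d' := by omega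
    have hd'2 : d' ≤ (μ k).sum := by
      rw [← hlam k]
      have := pSum_succ lam k
      omega
    obtain ⟨r, ct, hrk, hct, hval⟩ := (hσ k hk).exists_box d' hd'1 hd'2
    have hrm : r < maxLen n μ := lt_of_lt_of_le hrk (len_le_maxLen n μ hk)
    have hcs : Srow μ k r + ct < Srow μ (k+1) r := by
      have := Srow_succ μ k r
      have hc' : ct < Mrow μ k r := hct
      omega
    have hcn : Srow μ k r + ct < Srow μ n r :=
      lt_of_lt_of_le hcs (Srow_mono μ r (by omega))
    refine ⟨r, Srow μ k r + ct, ?_, ?_, ?_⟩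
    · rw [hlen]; exact hrm
    · rw [hget r hrm]; exact hcn
    · rw [stkEntry_seg n μ σ hk (by omega) hcs]
      have : Srow μ k r + ct - Srow μ k r = ct := by omega
      rw [this, hval, shift_eq_pSum μ lam hlam k]
      omega
  · -- inj
    intro r c r' c' hr hc hr' hc'
    rw [hlen] at hr hr'
    rw [hget r hr] at hc
    rw [hget r' hr'] at hc'
    obtain ⟨k, hk, h1, h2, hval, hcm, hrk⟩ := hseg hr hc
    obtain ⟨k', hk', h1', h2', hval', hcm', hrk'⟩ := hseg hr' hc'
    intro heq
    rw [hval, hval'] at heq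
    have hmem := (hσ k hk).entry_mem r (c - Srow μ k r) hrk hcm
    have hmem' := (hσ k' hk').entry_mem r' (c' - Srow μ k' r') hrk' hcm'
    have hs1 : shift μ (k+1) = shift μ k + lam k := shift_succ' μ lam hlam k
    have hs1' : shift μ (k'+1) = shift μ k' + lam k' := shift_succ' μ lam hlam k'
    rw [← hlam k] at hmem
    rw [← hlam k'] at hmem'
    have hpk := shift_eq_pSum μ lam hlam k
    have hpk1 := shift_eq_pSum μ lam hlam (k+1)
    have hpk' := shift_eq_pSum μ lam hlam k'
    have hpk1' := shift_eq_pSum μ lam hlam (k'+1)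
    have hps := pSum_succ lam k
    have hps' := pSum_succ lam k'
    have hkk' : k = k' := by
      apply val_block_unique (lam := lam) (v := σ k r (c - Srow μ k r) + shift μ k)
        (k := k) (k' := k') <;> omega
    subst hkk'
    have heq2 : σ k r (c - Srow μ k r) = σ k r' (c' - Srow μ k r') := by omega
    obtain ⟨hre, hce⟩ := (hσ k hk).inj _ _ _ _ hrk hcm hrk' hcm' heq2
    subst hre
    exact ⟨rfl, by omega⟩
  · -- row_lt
    intro r c c' hr hcc' hc'
    rw [hlen] at hr
    rw [hget r hr] at hc'
    have hc : c < Srow μ n r := by omega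
    obtain ⟨k, hk, h1, h2, hval, hcm, hrk⟩ := hseg hr hc
    obtain ⟨k', hk', h1', h2', hval', hcm', hrk'⟩ := hseg hr hc'
    have hkk' : k ≤ k' := by
      by_contra hcon
      push_neg at hcon
      have : Srow μ (k'+1) r ≤ Srow μ k r := Srow_mono μ r (by omega)
      omega
    rw [hval, hval']
    rcases Nat.eq_or_lt_of_le hkk' with rfl | hlt
    · have := (hσ k hk).row_lt r (c - Srow μ k r) (c' - Srow μ k r) hrk (by omega) hcm'
      omega
    · have hmem := (hσ k hk).entry_mem r (c - Srow μ k r) hrk hcm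
      have hmem' := (hσ k' hk').entry_mem r (c' - Srow μ k' r) hrk' hcm'
      have hs1 : shift μ (k+1) = shift μ k + lam k := shift_succ' μ lam hlam k
      have hs2 : shift μ (k+1) ≤ shift μ k' := shift_mono' μ lam hlam hlt
      rw [← hlam k] at hmem
      omega
  · -- col_lt
    intro r r' c hrr' hr' hc
    rw [hlen] at hr'
    rw [hget r' hr'] at hc
    have hrm : r < maxLen n μ := by omega
    have hc2 : c < Srow μ n r :=
      lt_of_lt_of_le hc (Srow_anti n μ hpart (le_refl n) (by omega))
    obtain ⟨k, hk, h1, h2, hval, hcm, hrk⟩ := hseg hrm hc2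
    obtain ⟨k', hk', h1', h2', hval', hcm', hrk'⟩ := hseg hr' hc
    have hkk' : k ≤ k' := by
      by_contra hcon
      push_neg at hcon
      have e1 : Srow μ (k'+1) r' ≤ Srow μ k r' := Srow_mono μ r' (by omega)
      have e2 : Srow μ k r' ≤ Srow μ k r := Srow_anti n μ hpart (by omega) (by omega)
      omega
    rw [hval, hval']
    rcases Nat.eq_or_lt_of_le hkk' with rfl | hlt
    · -- same segment
      have hanti : Srow μ k r' ≤ Srow μ k r := Srow_anti n μ hpart (by omega) (by omega)
      set c₁ := c - Srow μ k r with hc₁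
      set c₂ := c - Srow μ k r' with hc₂
      have hc₁₂ : c₁ ≤ c₂ := by omega
      have hstep : σ k r c₁ ≤ σ k r c₂ := by
        rcases Nat.eq_or_lt_of_le hc₁₂ with heq | hlt2
        · rw [heq]
        · have hcm2 : c₂ < Mrow μ k r := by
            have := Mrow_anti n μ hpart hk (le_of_lt hrr')
            omega
          exact le_of_lt ((hσ k hk).row_lt r c₁ c₂ hrk hlt2 hcm2)
      have hcol : σ k r c₂ < σ k r' c₂ := (hσ k hk).col_lt r r' c₂ hrr' hrk' hcm'
      omega
    · -- different segments
      have hmem := (hσ k hk).entry_mem r (c - Srow μ k r) hrk hcm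
      have hs1 : shift μ (k+1) = shift μ k + lam k := shift_succ' μ lam hlam k
      have hs2 : shift μ (k+1) ≤ shift μ k' := shift_mono' μ lam hlam hlt
      have hmem' := (hσ k' hk').entry_mem r' (c - Srow μ k' r') hrk' hcm'
      rw [← hlam k] at hmem
      omega

end Stk


open Finset

section Counts

variable (n : ℕ) (μ : ℕ → List ℕ) (lam : ℕ → ℕ) (σ : ℕ → ℕ → ℕ → ℕ)
variable (hpart : ∀ i < n, IsPartitionL (μ i))
variable (hlam : ∀ k, lam k = (μ k).sum)
variable (hpos : ∀ k < n, 0 < lam k)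
variable (hσ : ∀ k < n, IsStdTableau (μ k) (σ k))

include hσ in
/-- Per-block entry count over the full row range. -/
lemma entriesInCols_block {j : ℕ} (hj : j < n) (d b : ℕ) :
    entriesInCols (μ j) (σ j) d b =
      ∑ r ∈ range (maxLen n μ),
        ((range (Mrow μ j r)).filter (fun c => σ j r c ≤ d ∧ c < b)).card := by
  rw [entriesInCols_eq_sum (hσ j hj)]
  apply Finset.sum_subset
  · exact Finset.range_subset_range.mpr (len_le_maxLen n μ hj)
  · intro r _ hr
    rw [Finset.mem_range, Nat.not_lt] at hr
    have : Mrow μ j r = 0 := Mrow_eq_zero_of_ge_len μ hr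
    rw [show ((μ j).getD r 0) = Mrow μ j r from rfl, this]
    simp

include hpart hlam hpos hσ in
/-- Count of stacked entries `≤ pSum j + d` in the first `p` columns. -/
lemma stk_count {j : ℕ} (hj : j < n) {d : ℕ} (hd1 : 1 ≤ d) (hd2 : d ≤ lam j) (p : ℕ) :
    entriesInCols (sumShape n μ) (stkEntry n μ σ) (pSum lam j + d) p
      = (∑ r ∈ range (maxLen n μ), min p (Srow μ j r))
        + ∑ r ∈ range (maxLen n μ),
            ((range (Mrow μ j r)).filter
              (fun c => Srow μ j r + c < p ∧ σ j r c ≤ d)).card := by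
  classical
  have hstd := stk_std n μ lam σ hpart hlam hpos hσ
  rw [entriesInCols_eq_sum hstd]
  rw [sumShape_length n μ]
  rw [← Finset.sum_add_distrib]
  apply Finset.sum_congr rfl
  intro r hrm
  rw [Finset.mem_range] at hrm
  rw [sumShape_getD n μ hrm]
  set i := pSum lam j + d with hi
  set A := (range (Srow μ n r)).filter (fun c => c < Srow μ j r ∧ c < p) with hA
  set B := ((range (Mrow μ j r)).filter
      (fun ct => Srow μ j r + ct < p ∧ σ j r ct ≤ d)).image
      (fun ct => Srow μ j r + ct) with hB
  have hsplit : (range (Srow μ n r)).filter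
      (fun c => stkEntry n μ σ r c ≤ i ∧ c < p) = A ∪ B := by
    ext c
    simp only [hA, hB, Finset.mem_union, Finset.mem_filter, Finset.mem_range,
      Finset.mem_image]
    constructor
    · rintro ⟨hcn, hsi, hcp⟩
      obtain ⟨k, hk, h1, h2⟩ := col_block n μ trivial hcn
      have hcm : c - Srow μ k r < Mrow μ k r := by
        have := Srow_succ μ k r; omega
      have hrlen : r < (μ k).length := by
        by_contra hcon
        push_neg at hcon
        have := Mrow_eq_zero_of_ge_len μ (k := k) hcon
        omega
      have hval := stkEntry_seg n μ σ hk h1 h2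
      have hmem := (hσ k hk).entry_mem r (c - Srow μ k r) hrlen hcm
      rw [← hlam k] at hmem
      have hpk := shift_eq_pSum μ lam hlam k
      rcases lt_trichotomy k j with hkj | hkj | hkj
      · left
        have : Srow μ (k+1) r ≤ Srow μ j r := Srow_mono μ r (by omega)
        exact ⟨hcn, by omega, hcp⟩
      · right
        subst hkj
        refine ⟨c - Srow μ k r, ⟨hcm, ⟨by omega, ?_⟩⟩, by omega⟩
        have hps := pSum_succ lam k
        omega
      · exfalso
        have hple : pSum lam (j+1) ≤ pSum lam k := pSum_le lam (by omega)
        have hps := pSum_succ lam j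
        omega
    · rintro (⟨hcn, hcj, hcp⟩ | ⟨ct, ⟨hctm, hctp, hctd⟩, rfl⟩)
      · refine ⟨hcn, ?_, hcp⟩
        obtain ⟨k, hk, h1, h2⟩ := col_block n μ trivial hcn
        have hkj : k < j := by
          by_contra hcon
          push_neg at hcon
          have : Srow μ j r ≤ Srow μ k r := Srow_mono μ r hcon
          omega
        have hcm : c - Srow μ k r < Mrow μ k r := by
          have := Srow_succ μ k r; omega
        have hrlen : r < (μ k).length := by
          by_contra hcon
          push_neg at hcon
          have := Mrow_eq_zero_of_ge_len μ (k := k) hcon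
          omega
        have hval := stkEntry_seg n μ σ hk h1 h2
        have hmem := (hσ k hk).entry_mem r (c - Srow μ k r) hrlen hcm
        rw [← hlam k] at hmem
        have hpk := shift_eq_pSum μ lam hlam k
        have hps := pSum_succ lam k
        have hple : pSum lam (k+1) ≤ pSum lam j := pSum_le lam (by omega)
        omega
      · have hlt1 : Srow μ j r + ct < Srow μ (j+1) r := by
          have := Srow_succ μ j r; omega
        have hlt2 : Srow μ j r + ct < Srow μ n r :=
          lt_of_lt_of_le hlt1 (Srow_mono μ r (by omega))
        refine ⟨hlt2, ?_, hctp⟩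
        have hval := stkEntry_seg n μ σ hj (Nat.le_add_right _ _) hlt1
        have harr : Srow μ j r + ct - Srow μ j r = ct := by omega
        rw [harr] at hval
        have hpk := shift_eq_pSum μ lam hlam j
        omega
  rw [hsplit, Finset.card_union_of_disjoint]
  · congr 1
    · -- card A = min p (Srow j r)
      have : A = range (min p (Srow μ j r)) := by
        have hle : Srow μ j r ≤ Srow μ n r := Srow_mono μ r (by omega)
        ext c
        simp only [hA, Finset.mem_filter, Finset.mem_range, lt_min_iff]
        omega
      rw [this, Finset.card_range]
    · -- card B
      rw [hB, Finset.card_image_of_injective _ (fun x y h => by omega)]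
  · -- disjoint
    simp only [Finset.disjoint_left, hA, hB]
    rintro c hc hc'
    simp only [Finset.mem_filter, Finset.mem_range] at hc
    simp only [Finset.mem_image, Finset.mem_filter, Finset.mem_range] at hc'
    obtain ⟨ct, _, heq⟩ := hc'
    omega

include hpart hσ in
/-- Key combinatorial choice (Lemma W). -/
lemma lemW {j : ℕ} (hj : j < n) (d p : ℕ) :
    ∃ a b, a + b = p ∧
      (∑ r ∈ range (maxLen n μ), min p (Srow μ j r))
        + (∑ r ∈ range (maxLen n μ),
            ((range (Mrow μ j r)).filter
              (fun c => Srow μ j r + c < p ∧ σ j r c ≤ d)).card)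
      ≤ (∑ r ∈ range (maxLen n μ), min a (Srow μ j r))
          + entriesInCols (μ j) (σ j) d b := by
  classical
  set m := maxLen n μ with hm
  set RB := boxSet m (Mrow μ j) (fun r c => Srow μ j r + c < p ∧ σ j r c ≤ d) with hRB
  rcases RB.eq_empty_or_nonempty with hemp | hne
  · refine ⟨p, 0, by omega, ?_⟩
    have hz : ∀ r ∈ range m, ((range (Mrow μ j r)).filter
        (fun c => Srow μ j r + c < p ∧ σ j r c ≤ d)).card = 0 := by
      intro r hr
      rw [Finset.mem_range] at hr
      rw [Finset.card_eq_zero]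
      ext c
      simp only [Finset.mem_filter, Finset.mem_range, Finset.notMem_empty, iff_false]
      rintro ⟨h1, h2, h3⟩
      have : (r, c) ∈ RB := mem_boxSet.mpr ⟨hr, h1, h2, h3⟩
      rw [hemp] at this
      exact absurd this (Finset.notMem_empty _)
    rw [Finset.sum_congr rfl hz]
    simp
  · -- choose a box with maximal column
    have hine : (RB.image Prod.snd).Nonempty := hne.image _
    have hc₀mem : (RB.image Prod.snd).max' hine ∈ RB.image Prod.snd :=
      (RB.image Prod.snd).max'_mem hine
    obtain ⟨⟨r₀, cmax⟩, hbox₀, hsnd⟩ := Finset.mem_image.mp hc₀mem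
    simp only at hsnd
    obtain ⟨hr₀m, hc₀M, hP₀, hσ₀⟩ := mem_boxSet.mp hbox₀
    dsimp only at hr₀m hc₀M hP₀ hσ₀
    have hmax : ∀ rc ∈ RB, rc.2 ≤ cmax := by
      intro rc hrc
      have := (RB.image Prod.snd).le_max' rc.2 (Finset.mem_image_of_mem Prod.snd hrc)
      omega
    have hb_le_p : cmax + 1 ≤ p := by omega
    set b := cmax + 1 with hb
    set a := p - b with ha
    have hab : a + b = p := by omega
    have haS : Srow μ j r₀ ≤ a := by omega
    have hr₀len : r₀ < (μ j).length := row_valid μ (by omega)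
    refine ⟨a, b, hab, ?_⟩
    rw [entriesInCols_block n μ σ hσ hj d b]
    rw [← Finset.sum_add_distrib, ← Finset.sum_add_distrib]
    apply Finset.sum_le_sum
    intro r hr
    rw [Finset.mem_range] at hr
    rcases le_or_gt (Srow μ j r) a with hcase | hcase
    · -- small rows : subset argument
      have hmin1 : min p (Srow μ j r) = Srow μ j r := min_eq_right (by omega)
      have hmin2 : min a (Srow μ j r) = Srow μ j r := min_eq_right hcase
      have hsub : ((range (Mrow μ j r)).filter
          (fun c => Srow μ j r + c < p ∧ σ j r c ≤ d)) ⊆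
          ((range (Mrow μ j r)).filter (fun c => σ j r c ≤ d ∧ c < b)) := by
        intro c hc
        simp only [Finset.mem_filter, Finset.mem_range] at hc ⊢
        refine ⟨hc.1, hc.2.2, ?_⟩
        have : (r, c) ∈ RB := mem_boxSet.mpr ⟨hr, hc.1, hc.2.1, hc.2.2⟩
        have := hmax _ this
        simp only at this
        omega
      have := Finset.card_le_card hsub
      omega
    · -- big rows
      have hrr₀ : r < r₀ := by
        by_contra hcon
        push_neg at hcon
        have : Srow μ j r ≤ Srow μ j r₀ := Srow_anti n μ hpart (le_of_lt hj) hcon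
        omega
      have hMle : Mrow μ j r₀ ≤ Mrow μ j r := Mrow_anti n μ hpart hj (le_of_lt hrr₀)
      have hrlen : r < (μ j).length := row_valid μ (by omega)
      -- cardC = b
      have hC : ((range (Mrow μ j r)).filter (fun c => σ j r c ≤ d ∧ c < b))
          = range b := by
        ext c
        simp only [Finset.mem_filter, Finset.mem_range]
        constructor
        · rintro ⟨_, _, h3⟩; exact h3
        · intro hcb
          have hcM : c < Mrow μ j r := by omega
          refine ⟨hcM, ?_, hcb⟩
          have hstep : σ j r c ≤ σ j r cmax := by
            rcases Nat.eq_or_lt_of_le (show c ≤ cmax by omega) with heq | hlt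
            · rw [heq]
            · exact le_of_lt ((hσ j hj).row_lt r c cmax hrlen hlt (show cmax < Mrow μ j r by omega))
          have hcol : σ j r cmax < σ j r₀ cmax :=
            (hσ j hj).col_lt r r₀ cmax hrr₀ hr₀len hc₀M
          omega
      -- cardR' ≤ p - Srow j r
      have hRle : ((range (Mrow μ j r)).filter
          (fun c => Srow μ j r + c < p ∧ σ j r c ≤ d)).card ≤ p - Srow μ j r := by
        have hsub : ((range (Mrow μ j r)).filter
            (fun c => Srow μ j r + c < p ∧ σ j r c ≤ d)) ⊆ range (p - Srow μ j r) := by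
          intro c hc
          simp only [Finset.mem_filter, Finset.mem_range] at hc ⊢
          omega
        have := Finset.card_le_card hsub
        rw [Finset.card_range] at this
        exact this
      rw [hC, Finset.card_range]
      have hm1 : min a (Srow μ j r) = a := min_eq_left (by omega)
      have hm2 : min p (Srow μ j r) ≤ p := min_le_left _ _
      have hm3 : min p (Srow μ j r) ≤ Srow μ j r := min_le_right _ _
      rcases le_total (Srow μ j r) p with hsp | hsp
      · rw [min_eq_right hsp]
        omega
      · rw [min_eq_left hsp]
        have : p - Srow μ j r = 0 := by omega
        omega

end Counts


open Finset Submodule Module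



section Geom

variable {𝕜 V : Type*} [Field 𝕜] [AddCommGroup V] [Module 𝕜 V] [FiniteDimensional 𝕜 V]

/-- rank–nullity for a restricted endomorphism. -/
lemma finrank_map_add_finrank_inf_ker (f : V →ₗ[𝕜] V) (U : Submodule 𝕜 V) :
    finrank 𝕜 ↥(U.map f) + finrank 𝕜 ↥(U ⊓ LinearMap.ker f) = finrank 𝕜 ↥U := by
  have h := LinearMap.finrank_range_add_finrank_ker (f.domRestrict U)
  rw [LinearMap.range_domRestrict, LinearMap.ker_domRestrict] at h
  have hker : comap U.subtype (LinearMap.ker f)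
      = comap U.subtype (LinearMap.ker f ⊓ U) := by
    ext x
    simp only [Submodule.mem_comap, Submodule.mem_inf]
    exact ⟨fun hx => ⟨hx, x.2⟩, fun hx => hx.1⟩
  rw [hker] at h
  have he := Submodule.comapSubtypeEquivOfLe (p := LinearMap.ker f ⊓ U) (q := U)
    inf_le_right
  rw [he.finrank_eq] at h
  rw [inf_comm] at h
  exact h

lemma finrank_sup_le' (X Y : Submodule 𝕜 V) :
    finrank 𝕜 ↥(X ⊔ Y) ≤ finrank 𝕜 ↥X + finrank 𝕜 ↥Y := by
  have := Submodule.finrank_sup_add_finrank_inf_eq X Y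
  omega

variable (n : ℕ) (μ : ℕ → List ℕ) (lam : ℕ → ℕ) (σ : ℕ → ℕ → ℕ → ℕ)
variable (Vsub : ℕ → Submodule 𝕜 V) (e e0 : V →ₗ[𝕜] V) (F : ℕ → ℕ → Submodule 𝕜 V)

/-- partial sums of the decomposition. -/
def Wd (j : ℕ) : Submodule 𝕜 V := ∑ k ∈ Finset.range j, Vsub k

variable (hpart : ∀ i < n, IsPartitionL (μ i))
variable (hlam : ∀ k, lam k = (μ k).sum)
variable (hdecomp : IsDecomp n lam Vsub)
variable (he : ∀ j < n, Submodule.map e (Vsub j) ≤ ∑ k ∈ Finset.range (j + 1), Vsub k)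
variable (he0 : ∀ j < n, ∀ x ∈ Vsub j, e0 x ∈ Vsub j ∧
      e x - e0 x ∈ ∑ k ∈ Finset.range j, Vsub k)
variable (he0type : ∀ k < n, ∀ p : ℕ,
      Module.finrank 𝕜 ↥(Vsub k ⊓ LinearMap.ker (e0 ^ p)) =
      ∑ j ∈ Finset.range (μ k).length, min p ((μ k).getD j 0))

lemma Wd_zero : Wd Vsub 0 = ⊥ := by simp [Wd]

lemma Wd_succ (j : ℕ) : Wd Vsub (j+1) = Wd Vsub j ⊔ Vsub j := by
  rw [Wd, Wd, Finset.sum_range_succ]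
  rfl

lemma Wd_mono {j j' : ℕ} (h : j ≤ j') : Wd Vsub j ≤ Wd Vsub j' :=
  Finset.sum_le_sum_of_subset (Finset.range_subset_range.mpr h)

include he in
lemma Wd_stable : ∀ j ≤ n, Submodule.map e (Wd Vsub j) ≤ Wd Vsub j := by
  intro j
  induction j with
  | zero => intro _; rw [Wd_zero]; simp
  | succ j ih =>
    intro hj
    rw [Wd_succ, Submodule.map_sup]
    apply sup_le
    · exact le_trans (ih (by omega)) le_sup_left
    · have h2 := he j (by omega)
      rw [← Wd_succ]
      exact h2

include hdecomp in
lemma Wd_disj {j : ℕ} (hj : j < n) : Wd Vsub j ⊓ Vsub j = ⊥ := by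
  have hsub : Wd Vsub j ≤ ∑ l ∈ (Finset.range n).erase j, Vsub l := by
    apply Finset.sum_le_sum_of_subset
    intro k hk
    rw [Finset.mem_range] at hk
    rw [Finset.mem_erase, Finset.mem_range]
    omega
  have := ((hdecomp.indep j hj).mono_right hsub).symm
  exact disjoint_iff.mp this

include hdecomp in
lemma Wd_finrank : ∀ j ≤ n, finrank 𝕜 ↥(Wd Vsub j) = pSum lam j := by
  intro j
  induction j with
  | zero => intro _; rw [Wd_zero]; simp [pSum]
  | succ j ih =>
    intro hj
    rw [Wd_succ]
    have h := Submodule.finrank_sup_add_finrank_inf_eq (Wd Vsub j) (Vsub j)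
    rw [Wd_disj n lam Vsub hdecomp (show j < n by omega)] at h
    simp only [finrank_bot, add_zero] at h
    rw [h, ih (by omega), hdecomp.dim j (by omega), pSum_succ]

include he he0 in
lemma decomp_map_pow : ∀ (b : ℕ) (X : Submodule 𝕜 V) {j : ℕ}, j < n → X ≤ Vsub j →
    Submodule.map (e^b) (Wd Vsub j ⊔ X) ≤ Wd Vsub j ⊔ Submodule.map (e0^b) X := by
  intro b
  induction b with
  | zero =>
    intro X j hj hX
    simp only [pow_zero, Module.End.one_eq_id, Submodule.map_id, le_refl]
  | succ b ih =>
    intro X j hj hX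
    have hstep : Submodule.map e (Wd Vsub j ⊔ X) ≤ Wd Vsub j ⊔ Submodule.map e0 X := by
      rw [Submodule.map_sup]
      apply sup_le
      · exact le_trans (Wd_stable n Vsub e he j (by omega)) le_sup_left
      · rw [Submodule.map_le_iff_le_comap]
        intro x hx
        rw [Submodule.mem_comap]
        have hx' := he0 j hj x (hX hx)
        have : e x = (e x - e0 x) + e0 x := by abel
        rw [this]
        apply Submodule.add_mem
        · exact Submodule.mem_sup_left hx'.2
        · exact Submodule.mem_sup_right (Submodule.mem_map_of_mem hx)
    have hX' : Submodule.map e0 X ≤ Vsub j := by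
      rw [Submodule.map_le_iff_le_comap]
      intro x hx
      rw [Submodule.mem_comap]
      exact (he0 j hj x (hX hx)).1
    calc Submodule.map (e^(b+1)) (Wd Vsub j ⊔ X)
        = Submodule.map (e^b) (Submodule.map e (Wd Vsub j ⊔ X)) := by
          rw [pow_succ, Module.End.mul_eq_comp, Submodule.map_comp]
      _ ≤ Submodule.map (e^b) (Wd Vsub j ⊔ Submodule.map e0 X) :=
          Submodule.map_mono hstep
      _ ≤ Wd Vsub j ⊔ Submodule.map (e0^b) (Submodule.map e0 X) := ih _ hj hX'
      _ = Wd Vsub j ⊔ Submodule.map (e0^(b+1)) X := by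
          rw [pow_succ, Module.End.mul_eq_comp, Submodule.map_comp]

include hpart hlam hdecomp he0type in
lemma Zb_finrank {j : ℕ} (hj : j < n) (b : ℕ) :
    finrank 𝕜 ↥(Submodule.map (e0^b) (Vsub j))
      = ∑ r ∈ range (maxLen n μ), (Mrow μ j r - b) := by
  have h1 := finrank_map_add_finrank_inf_ker (e0^b) (Vsub j)
  have h2 := he0type j hj b
  have h3 : ∑ r ∈ Finset.range (μ j).length, min b ((μ j).getD r 0)
      = ∑ r ∈ range (maxLen n μ), min b (Mrow μ j r) := by
    apply Finset.sum_subset (Finset.range_subset_range.mpr (len_le_maxLen n μ hj))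
    intro r _ hr
    rw [Finset.mem_range, Nat.not_lt] at hr
    rw [show ((μ j).getD r 0) = Mrow μ j r from rfl, Mrow_eq_zero_of_ge_len μ hr]
    simp
  have h4 : finrank 𝕜 ↥(Vsub j) = ∑ r ∈ range (maxLen n μ), Mrow μ j r := by
    rw [hdecomp.dim j hj]
    exact lam_eq_sum_Mrow n μ lam hlam hj _ (le_refl _)
  have h5 : ∑ r ∈ range (maxLen n μ), min b (Mrow μ j r)
        + ∑ r ∈ range (maxLen n μ), (Mrow μ j r - b)
      = ∑ r ∈ range (maxLen n μ), Mrow μ j r := by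
    rw [← Finset.sum_add_distrib]
    apply Finset.sum_congr rfl
    intro r _
    omega
  omega

include hpart hlam hdecomp he he0 he0type in
/-- R1 : upper bound for the rank of `e^p` on `Wd j`. -/
lemma rank_Wd_le : ∀ j ≤ n, ∀ p : ℕ,
    finrank 𝕜 ↥(Submodule.map (e^p) (Wd Vsub j))
      ≤ ∑ r ∈ range (maxLen n μ), (Srow μ j r - p) := by
  intro j
  induction j with
  | zero =>
    intro _ p
    rw [Wd_zero, Submodule.map_bot, finrank_bot]
    exact Nat.zero_le _
  | succ j ih =>
    intro hj p
    obtain ⟨a, b, hab, hineq⟩ := lemD (Srow μ j) (Mrow μ j) (maxLen n μ) p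
      (fun r r' h => Srow_anti n μ hpart (by omega) h)
      (fun r r' h => Mrow_anti n μ hpart (by omega) h)
    have hchain : finrank 𝕜 ↥(Submodule.map (e^p) (Wd Vsub (j+1)))
        ≤ finrank 𝕜 ↥(Submodule.map (e^a) (Wd Vsub j))
          + finrank 𝕜 ↥(Submodule.map (e0^b) (Vsub j)) := by
      have hsplit : Submodule.map (e^p) (Wd Vsub (j+1))
          = Submodule.map (e^a) (Submodule.map (e^b) (Wd Vsub (j+1))) := by
        rw [← hab, pow_add, Module.End.mul_eq_comp, Submodule.map_comp]
      rw [hsplit]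
      have hG3 : Submodule.map (e^b) (Wd Vsub (j+1))
          ≤ Wd Vsub j ⊔ Submodule.map (e0^b) (Vsub j) := by
        rw [Wd_succ]
        exact decomp_map_pow n Vsub e e0 he he0 b (Vsub j) (by omega) (le_refl _)
      calc finrank 𝕜 ↥(Submodule.map (e^a) (Submodule.map (e^b) (Wd Vsub (j+1))))
          ≤ finrank 𝕜 ↥(Submodule.map (e^a)
              (Wd Vsub j ⊔ Submodule.map (e0^b) (Vsub j))) :=
            Submodule.finrank_mono (Submodule.map_mono hG3)
        _ = finrank 𝕜 ↥(Submodule.map (e^a) (Wd Vsub j)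
              ⊔ Submodule.map (e^a) (Submodule.map (e0^b) (Vsub j))) := by
            rw [Submodule.map_sup]
        _ ≤ finrank 𝕜 ↥(Submodule.map (e^a) (Wd Vsub j))
              + finrank 𝕜 ↥(Submodule.map (e^a) (Submodule.map (e0^b) (Vsub j))) :=
            finrank_sup_le' _ _
        _ ≤ finrank 𝕜 ↥(Submodule.map (e^a) (Wd Vsub j))
              + finrank 𝕜 ↥(Submodule.map (e0^b) (Vsub j)) := by
            have := Submodule.finrank_map_le (e^a) (Submodule.map (e0^b) (Vsub j))
            omega
    have hZ := Zb_finrank n μ lam Vsub e0 hpart hlam hdecomp he0type (by omega : j < n) b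
    have hIH := ih (by omega) a
    have hfin : ∑ r ∈ range (maxLen n μ), (Srow μ (j+1) r - p)
        = ∑ r ∈ range (maxLen n μ), (Srow μ j r + Mrow μ j r - p) := by
      apply Finset.sum_congr rfl
      intro r _
      rw [Srow_succ]
    omega

end Geom


open Finset Submodule Module


section Geom2

variable {𝕜 V : Type*} [Field 𝕜] [AddCommGroup V] [Module 𝕜 V] [FiniteDimensional 𝕜 V]
variable (n : ℕ) (μ : ℕ → List ℕ) (lam : ℕ → ℕ) (σ : ℕ → ℕ → ℕ → ℕ)
variable (Vsub : ℕ → Submodule 𝕜 V) (e e0 : V →ₗ[𝕜] V) (F : ℕ → ℕ → Submodule 𝕜 V)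
variable (hpart : ∀ i < n, IsPartitionL (μ i))
variable (hlam : ∀ k, lam k = (μ k).sum)
variable (hpos : ∀ k < n, 0 < lam k)
variable (hσ : ∀ k < n, IsStdTableau (μ k) (σ k))
variable (hdecomp : IsDecomp n lam Vsub)
variable (he : ∀ j < n, Submodule.map e (Vsub j) ≤ ∑ k ∈ Finset.range (j + 1), Vsub k)
variable (he0 : ∀ j < n, ∀ x ∈ Vsub j, e0 x ∈ Vsub j ∧
      e x - e0 x ∈ ∑ k ∈ Finset.range j, Vsub k)
variable (he0type : ∀ k < n, ∀ p : ℕ,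
      Module.finrank 𝕜 ↥(Vsub k ⊓ LinearMap.ker (e0 ^ p)) =
      ∑ j ∈ Finset.range (μ k).length, min p ((μ k).getD j 0))
variable (hF : ∀ k < n, IsFlagOf (Vsub k) (lam k) (F k))
variable (hΦ0 : ∀ k < n, ∀ d ≤ lam k, ∀ p : ℕ,
      Module.finrank 𝕜 ↥(F k d ⊓ LinearMap.ker (e0 ^ p)) = entriesInCols (μ k) (σ k) d p)

include hpart hlam hdecomp he he0 he0type hF hΦ0 in
lemma R4 {j : ℕ} (hj : j < n) {d : ℕ} (hd : d ≤ lam j) {p a b : ℕ} (hab : a + b = p) :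
    (∑ r ∈ range (maxLen n μ), min a (Srow μ j r)) + entriesInCols (μ j) (σ j) d b
      ≤ finrank 𝕜 ↥((Wd Vsub j ⊔ F j d) ⊓ LinearMap.ker (e ^ p)) := by
  have hFj := hF j hj
  have hFd : F j d ≤ Vsub j := hFj.le d
  have hdimF : finrank 𝕜 ↥(F j d) = d := hFj.dim d hd
  have hdisj : Wd Vsub j ⊓ F j d = ⊥ := by
    rw [eq_bot_iff]
    refine le_trans ?_ (le_of_eq (Wd_disj n lam Vsub hdecomp hj))
    exact inf_le_inf_left _ hFd
  have hWdim : finrank 𝕜 ↥(Wd Vsub j) = pSum lam j :=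
    Wd_finrank n lam Vsub hdecomp j (le_of_lt hj)
  have hsupdim : finrank 𝕜 ↥(Wd Vsub j ⊔ F j d) = pSum lam j + d := by
    have h := Submodule.finrank_sup_add_finrank_inf_eq (Wd Vsub j) (F j d)
    rw [hdisj] at h
    simp only [finrank_bot, add_zero] at h
    omega
  have hrn := finrank_map_add_finrank_inf_ker (e^p) (Wd Vsub j ⊔ F j d)
  have hmap : finrank 𝕜 ↥(Submodule.map (e^p) (Wd Vsub j ⊔ F j d))
      ≤ finrank 𝕜 ↥(Submodule.map (e^a) (Wd Vsub j))
        + finrank 𝕜 ↥(Submodule.map (e0^b) (F j d)) := by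
    have hsplit : Submodule.map (e^p) (Wd Vsub j ⊔ F j d)
        = Submodule.map (e^a) (Submodule.map (e^b) (Wd Vsub j ⊔ F j d)) := by
      rw [← hab, pow_add, Module.End.mul_eq_comp, Submodule.map_comp]
    rw [hsplit]
    have hG3 : Submodule.map (e^b) (Wd Vsub j ⊔ F j d)
        ≤ Wd Vsub j ⊔ Submodule.map (e0^b) (F j d) :=
      decomp_map_pow n Vsub e e0 he he0 b (F j d) hj hFd
    calc finrank 𝕜 ↥(Submodule.map (e^a) (Submodule.map (e^b) (Wd Vsub j ⊔ F j d)))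
        ≤ finrank 𝕜 ↥(Submodule.map (e^a)
            (Wd Vsub j ⊔ Submodule.map (e0^b) (F j d))) :=
          Submodule.finrank_mono (Submodule.map_mono hG3)
      _ = finrank 𝕜 ↥(Submodule.map (e^a) (Wd Vsub j)
            ⊔ Submodule.map (e^a) (Submodule.map (e0^b) (F j d))) := by
          rw [Submodule.map_sup]
      _ ≤ finrank 𝕜 ↥(Submodule.map (e^a) (Wd Vsub j))
            + finrank 𝕜 ↥(Submodule.map (e^a) (Submodule.map (e0^b) (F j d))) :=
          finrank_sup_le' _ _
      _ ≤ finrank 𝕜 ↥(Submodule.map (e^a) (Wd Vsub j))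
            + finrank 𝕜 ↥(Submodule.map (e0^b) (F j d)) := by
          have := Submodule.finrank_map_le (e^a) (Submodule.map (e0^b) (F j d))
          omega
  have hWa := rank_Wd_le n μ lam Vsub e e0 hpart hlam hdecomp he he0 he0type j
    (le_of_lt hj) a
  have hFb : finrank 𝕜 ↥(Submodule.map (e0^b) (F j d))
      + entriesInCols (μ j) (σ j) d b = d := by
    have h := finrank_map_add_finrank_inf_ker (e0^b) (F j d)
    rw [hΦ0 j hj d hd b] at h
    omega
  have hrow : (∑ r ∈ range (maxLen n μ), min a (Srow μ j r))
      + (∑ r ∈ range (maxLen n μ), (Srow μ j r - a))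
      = ∑ r ∈ range (maxLen n μ), Srow μ j r := by
    rw [← Finset.sum_add_distrib]
    apply Finset.sum_congr rfl
    intro r _
    omega
  have hpS : pSum lam j = ∑ r ∈ range (maxLen n μ), Srow μ j r :=
    pSum_eq_sum_Srow n μ lam hlam (le_of_lt hj)
  omega

include hpart hlam hpos hσ hdecomp he he0 he0type hF hΦ0 in
lemma star_ineq {i : ℕ} (hi1 : 1 ≤ i) (hi2 : i ≤ pSum lam n) (p : ℕ) :
    entriesInCols (sumShape n μ) (stkEntry n μ σ) i p
      ≤ finrank 𝕜 ↥(LSflag n lam Vsub F i ⊓ LinearMap.ker (e ^ p)) := by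
  obtain ⟨j, hj, h1, h2⟩ := val_block n lam hpos hi1 hi2
  set d := i - pSum lam j with hd
  have hps := pSum_succ lam j
  have hd1 : 1 ≤ d := by omega
  have hd2 : d ≤ lam j := by omega
  have hieq : i = pSum lam j + d := by omega
  have hidx : LSidx n lam i = j := by
    rw [hieq]; exact LSidx_eq n lam hpos hj hd1 hd2
  have hLS : LSflag n lam Vsub F i = Wd Vsub j ⊔ F j d := by
    rw [LSflag, hidx, ← hd]
    exact Submodule.add_eq_sup (Wd Vsub j) (F j d)
  rw [hLS, hieq]
  rw [stk_count n μ lam σ hpart hlam hpos hσ hj hd1 hd2 p]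
  obtain ⟨a, b, hab, hWineq⟩ := lemW n μ σ hpart hσ hj d p
  calc (∑ r ∈ range (maxLen n μ), min p (Srow μ j r))
        + ∑ r ∈ range (maxLen n μ),
            ((range (Mrow μ j r)).filter
              (fun c => Srow μ j r + c < p ∧ σ j r c ≤ d)).card
      ≤ (∑ r ∈ range (maxLen n μ), min a (Srow μ j r))
          + entriesInCols (μ j) (σ j) d b := hWineq
    _ ≤ finrank 𝕜 ↥((Wd Vsub j ⊔ F j d) ⊓ LinearMap.ker (e ^ p)) :=
        R4 n μ lam σ Vsub e e0 F hpart hlam hdecomp he he0 he0type hF hΦ0 hj hd2 hab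

end Geom2


end SpaltensteinAux

/-- (Key step for the stacking theorem.) Suppose `e` is nilpotent of Jordan
type `μ^Σ`, the block-diagonal part `e0` restricts to each `V_k` as a nilpotent of Jordan
type `μ k`, and `F k` are full flags of the `V_k` in the Springer fibre of `e0` with
Spaltenstein invariants `σ k ∈ Std(μ k)`. If `τ ∈ Std(μ^Σ)` is the Spaltenstein invariant
of the Lusztig–Spaltenstein flag `LS(F 0, ..., F (n-1))` with respect to `e`, then either
`τ = stk(σ 0, ..., σ (n-1))` or `stk(σ 0, ..., σ (n-1)) < τ` in the order on `Std(μ^Σ)`. -/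
theorem spaltenstein_invariant_of_LSflag_ge_stacking
    {𝕜 V : Type*} [Field 𝕜] [AddCommGroup V] [Module 𝕜 V] [FiniteDimensional 𝕜 V]
    (n : ℕ) (μ : ℕ → List ℕ)
    (hpart : ∀ i < n, IsPartitionL (μ i)) (hcomp : ∀ i < n, 0 < (μ i).sum)
    (lam : ℕ → ℕ) (hlam : ∀ k, lam k = (μ k).sum)
    (N : ℕ) (hN : N = ∑ k ∈ Finset.range n, lam k)
    (hdim : Module.finrank 𝕜 V = N)
    (Vsub : ℕ → Submodule 𝕜 V) (hdecomp : IsDecomp n lam Vsub)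
    (e e0 : V →ₗ[𝕜] V)
    (he : ∀ j < n, Submodule.map e (Vsub j) ≤ ∑ k ∈ Finset.range (j + 1), Vsub k)
    (he0 : ∀ j < n, ∀ x ∈ Vsub j, e0 x ∈ Vsub j ∧
      e x - e0 x ∈ ∑ k ∈ Finset.range j, Vsub k)
    (henil : IsNilpotent e)
    (hetype : ∀ p : ℕ, Module.finrank 𝕜 ↥(LinearMap.ker (e ^ p)) =
      ∑ j ∈ Finset.range (sumShape n μ).length, min p ((sumShape n μ).getD j 0))
    (he0type : ∀ k < n, ∀ p : ℕ,
      Module.finrank 𝕜 ↥(Vsub k ⊓ LinearMap.ker (e0 ^ p)) =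
      ∑ j ∈ Finset.range (μ k).length, min p ((μ k).getD j 0))
    (F : ℕ → ℕ → Submodule 𝕜 V) (hF : ∀ k < n, IsFlagOf (Vsub k) (lam k) (F k))
    (hspringer : ∀ k < n, ∀ d, Submodule.map e0 (F k (d + 1)) ≤ F k d)
    (σ : ℕ → ℕ → ℕ → ℕ) (hσ : ∀ k < n, IsStdTableau (μ k) (σ k))
    (hΦ0 : ∀ k < n, ∀ d ≤ lam k, ∀ p : ℕ,
      Module.finrank 𝕜 ↥(F k d ⊓ LinearMap.ker (e0 ^ p)) = entriesInCols (μ k) (σ k) d p)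
    (τ : ℕ → ℕ → ℕ) (hτ : IsStdTableau (sumShape n μ) τ)
    (hΦ : ∀ i ≤ N, ∀ p : ℕ,
      Module.finrank 𝕜 ↥(LSflag n lam Vsub F i ⊓ LinearMap.ker (e ^ p)) =
      entriesInCols (sumShape n μ) τ i p) :
    (∀ r c, r < (sumShape n μ).length → c < (sumShape n μ).getD r 0 →
      τ r c = stkEntry n μ σ r c) ∨
    TabLT (sumShape n μ) (stkEntry n μ σ) τ := by
  classical
  rcases Nat.eq_zero_or_pos n with hn | hn
  · left
    intro r c hr hc
    exfalso
    rw [sumShape_length] at hr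
    subst hn
    simp [maxLen] at hr
  · have hpos : ∀ k < n, 0 < lam k := fun k hk => by rw [hlam k]; exact hcomp k hk
    have hstdS := stk_std n μ lam σ hpart hlam hpos hσ
    have hWmon : ∀ r r', r ≤ r' → (sumShape n μ).getD r' 0 ≤ (sumShape n μ).getD r 0 := by
      intro r r' hrr'
      rcases Nat.lt_or_ge r' (maxLen n μ) with h | h
      · rw [sumShape_getD n μ h, sumShape_getD n μ (by omega)]
        exact Srow_anti n μ hpart (le_refl n) hrr'
      · rw [List.getD_eq_default _ _ (by rw [sumShape_length]; exact h)]
        exact Nat.zero_le _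
    have hpN : pSum lam n = N := hN.symm
    have hsum : (sumShape n μ).sum = N := by
      rw [sumShape_sum n μ lam hlam]; exact hpN
    have hstar : ∀ i, i ≤ (sumShape n μ).sum → ∀ p,
        entriesInCols (sumShape n μ) (stkEntry n μ σ) i p
          ≤ entriesInCols (sumShape n μ) τ i p := by
      intro i hi p
      rcases Nat.eq_zero_or_pos i with rfl | hi1
      · rw [entriesInCols_zero hstdS, entriesInCols_zero hτ]
      · rw [← hΦ i (by omega) p]
        exact star_ineq n μ lam σ Vsub e e0 F hpart hlam hpos hσ hdecomp he he0
          he0type hF hΦ0 hi1 (by omega) p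
    rcases reduction hstdS hτ hWmon hstar with hL | hR
    · left; exact hL
    · right; exact hR
end

section
/- Let e = e_0 + e_1 on the vector space V with basis {v_{i,j,k}} be the explicit representative described in the context. For each k ∈ {1,...,n} let σ^{(k)} ∈ Std(μ_k) and define F^{(k)}_d := span{ v_{k,l,m} : the entry of σ^{(k)} in box (l,m) is ≤ d } for 0 ≤ d ≤ λ_k; each F^{(k)}_• is a full flag of V_k. Then: (i) e_0(F^{(k)}_d) ⊆ F^{(k)}_{d-1} for all d ≥ 1 and Φ(F^{(k)}_•) = σ^{(k)} with respect to the nilpotent endomorphism e_0|_{V_k} (which has Jordan type μ_k); and (ii) the stacked flag F̄_• = LS(F^{(1)}_•,...,F^{(n)}_•) lies in the Springer fibre of e and Φ(F̄_•) = stk(σ^{(1)},...,σ^{(n)}) with respect to e (which has Jordan type μ^Σ). -/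
/-- The index set `𝕀`: 0-indexed triples `(i, j, k)` with `i < n`, `j` a row index of the
partition `μ i`, and `k < μ_{i,j}`. -/
def InIdx (n : ℕ) (μ : ℕ → List ℕ) (x : ℕ × ℕ × ℕ) : Prop :=
  x.1 < n ∧ x.2.1 < (μ x.1).length ∧ x.2.2 < (μ x.1).getD x.2.1 0

/-- The explicit representative: `v` restricted to `𝕀` is a basis of `V`, `e0` shifts each
basis vector one step down its own Jordan chain (within its Young diagram), and `e1` sends
the first vector `v (i,j,0)` of a chain to the last vector `v (i', j, μ_{i',j} - 1)` of the
chain in the same row `j` of the previous diagram `i' < i` having a nonzero `j`-th part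
(and to `0` if no such `i'` exists); `e1` kills all other basis vectors. -/
structure IsRep {𝕜 V : Type*} [Field 𝕜] [AddCommGroup V] [Module 𝕜 V]
    (n : ℕ) (μ : ℕ → List ℕ) (v : ℕ × ℕ × ℕ → V) (e0 e1 : V →ₗ[𝕜] V) : Prop where
  indep : LinearIndependent 𝕜 (fun x : {x : ℕ × ℕ × ℕ // InIdx n μ x} => v x)
  spans : Submodule.span 𝕜 (v '' {x | InIdx n μ x}) = ⊤
  e0_bot : ∀ i j, InIdx n μ (i, j, 0) → e0 (v (i, j, 0)) = 0
  e0_succ : ∀ i j k, InIdx n μ (i, j, k + 1) → e0 (v (i, j, k + 1)) = v (i, j, k)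
  e1_pos : ∀ i j k, InIdx n μ (i, j, k + 1) → e1 (v (i, j, k + 1)) = 0
  e1_link : ∀ i i' j, InIdx n μ (i, j, 0) → i' < i → 0 < (μ i').getD j 0 →
      (∀ i'', i' < i'' → i'' < i → (μ i'').getD j 0 = 0) →
      e1 (v (i, j, 0)) = v (i', j, (μ i').getD j 0 - 1)
  e1_none : ∀ i j, InIdx n μ (i, j, 0) → (∀ i' < i, (μ i').getD j 0 = 0) →
      e1 (v (i, j, 0)) = 0

namespace SpringerAux

open Submodule Finset

lemma list_range_map_sum (f : ℕ → ℕ) (n : ℕ) :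
    ((List.range n).map f).sum = ∑ i ∈ Finset.range n, f i := by
  induction n with
  | zero => simp
  | succ n ih => rw [List.range_succ]; simp [ih, Finset.sum_range_succ]

variable {𝕜 V : Type*} [Field 𝕜] [AddCommGroup V] [Module 𝕜 V]

lemma sum_span_eq (s : Finset ℕ) (g : ℕ → Set V) :
    (∑ k ∈ s, Submodule.span 𝕜 (g k)) = Submodule.span 𝕜 (⋃ k ∈ s, g k) := by
  classical
  induction s using Finset.induction with
  | empty => simp
  | insert _ _ h ih =>
    rw [Finset.sum_insert h, Finset.set_biUnion_insert, Submodule.span_union, ih,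
      Submodule.add_eq_sup]

lemma exists_block (g : ℕ → ℕ) : ∀ (n c : ℕ), c < ∑ k ∈ Finset.range n, g k →
    ∃ k, k < n ∧ ∃ m, m < g k ∧ c = (∑ k' ∈ Finset.range k, g k') + m := by
  intro n
  induction n with
  | zero => simp
  | succ n ih =>
    intro c hc
    by_cases h : c < ∑ k ∈ Finset.range n, g k
    · obtain ⟨k, hk, m, hm, rfl⟩ := ih c h
      exact ⟨k, hk.trans (Nat.lt_succ_self n), m, hm, rfl⟩
    · push_neg at h
      rw [Finset.sum_range_succ] at hc
      exact ⟨n, Nat.lt_succ_self n, c - ∑ k' ∈ Finset.range n, g k', by omega, by omega⟩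

lemma exists_block' (g : ℕ → ℕ) (n a : ℕ) (h1 : 1 ≤ a) (h2 : a ≤ ∑ k ∈ Finset.range n, g k) :
    ∃ k, k < n ∧ (∑ k' ∈ Finset.range k, g k') < a ∧
      a ≤ (∑ k' ∈ Finset.range k, g k') + g k := by
  obtain ⟨k, hk, m, hm, hc⟩ := exists_block g n (a - 1) (by omega)
  exact ⟨k, hk, by omega, by omega⟩

section Key

variable {ι : Type*} {v : ι → V} {I : Set ι} {e : V →ₗ[𝕜] V} {δ : ι → ℕ} {f : ι → ι}
  {A : Set ι}

/-- iterated step facts -/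
lemma iter_facts
    (hs : ∀ x ∈ A, 0 < δ x → f x ∈ A ∧ δ (f x) + 1 = δ x ∧ e (v x) = v (f x)) :
    ∀ p, ∀ x ∈ A, p ≤ δ x →
      f^[p] x ∈ A ∧ δ (f^[p] x) + p = δ x ∧ (e ^ p) (v x) = v (f^[p] x) := by
  intro p
  induction p with
  | zero => intro x hx _; simpa using hx
  | succ p ih =>
    intro x hx hp
    obtain ⟨hfA, hfd, hfe⟩ := hs x hx (by omega)
    obtain ⟨h1, h2, h3⟩ := ih (f x) hfA (by omega)
    refine ⟨by rw [Function.iterate_succ_apply]; exact h1, ?_, ?_⟩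
    · rw [Function.iterate_succ_apply]; omega
    · rw [Function.iterate_succ_apply, pow_succ, Module.End.mul_apply, hfe, h3]

lemma iter_ker
    (h0 : ∀ x ∈ A, δ x = 0 → e (v x) = 0)
    (hs : ∀ x ∈ A, 0 < δ x → f x ∈ A ∧ δ (f x) + 1 = δ x ∧ e (v x) = v (f x)) :
    ∀ p, ∀ x ∈ A, δ x < p → (e ^ p) (v x) = 0 := by
  intro p
  induction p with
  | zero => omega
  | succ p ih =>
    intro x hx hp
    rw [pow_succ, Module.End.mul_apply]
    rcases Nat.eq_zero_or_pos (δ x) with h | h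
    · rw [h0 x hx h, map_zero]
    · obtain ⟨hfA, hfd, hfe⟩ := hs x hx h
      rw [hfe]
      exact ih (f x) hfA (by omega)

lemma iter_inj
    (hs : ∀ x ∈ A, 0 < δ x → f x ∈ A ∧ δ (f x) + 1 = δ x ∧ e (v x) = v (f x))
    (hinj : ∀ x ∈ A, ∀ y ∈ A, 0 < δ x → 0 < δ y → f x = f y → x = y) :
    ∀ p, ∀ x ∈ A, ∀ y ∈ A, p ≤ δ x → p ≤ δ y → f^[p] x = f^[p] y → x = y := by
  intro p
  induction p with
  | zero => intro x _ y _ _ _ h; simpa using h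
  | succ p ih =>
    intro x hx y hy hpx hpy h
    rw [Function.iterate_succ_apply, Function.iterate_succ_apply] at h
    obtain ⟨hfAx, hfdx, _⟩ := hs x hx (by omega)
    obtain ⟨hfAy, hfdy, _⟩ := hs y hy (by omega)
    exact hinj x hx y hy (by omega) (by omega)
      (ih (f x) hfAx (f y) hfAy (by omega) (by omega) h)

lemma span_inf_ker (hv : LinearIndependent 𝕜 (fun x : I => v x)) (hA : A ⊆ I)
    (h0 : ∀ x ∈ A, δ x = 0 → e (v x) = 0)
    (hs : ∀ x ∈ A, 0 < δ x → f x ∈ A ∧ δ (f x) + 1 = δ x ∧ e (v x) = v (f x))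
    (hinj : ∀ x ∈ A, ∀ y ∈ A, 0 < δ x → 0 < δ y → f x = f y → x = y) (p : ℕ) :
    Submodule.span 𝕜 (v '' {x | x ∈ A ∧ δ x < p}) =
      Submodule.span 𝕜 (v '' A) ⊓ LinearMap.ker (e ^ p) := by
  classical
  have hsmall : Submodule.span 𝕜 (v '' {x | x ∈ A ∧ δ x < p}) ≤ LinearMap.ker (e ^ p) := by
    rw [Submodule.span_le]
    rintro _ ⟨x, ⟨hxA, hxd⟩, rfl⟩
    exact LinearMap.mem_ker.2 (iter_ker h0 hs p x hxA hxd)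
  refine le_antisymm (le_inf ?_ hsmall) ?_
  · exact Submodule.span_mono (Set.image_mono fun x hx => hx.1)
  intro w hw
  obtain ⟨hw1, hw2⟩ := Submodule.mem_inf.1 hw
  rw [Finsupp.mem_span_image_iff_linearCombination] at hw1
  obtain ⟨l, hl, rfl⟩ := hw1
  rw [LinearMap.mem_ker] at hw2
  set lneg := l.filter (fun x => δ x < p) with hlneg
  set lpos := l.filter (fun x => ¬ δ x < p) with hlpos
  have hsplit : lneg + lpos = l := by
    ext a
    simp only [Finsupp.add_apply, hlneg, hlpos, Finsupp.filter_apply]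
    split_ifs <;> simp_all
  have hsuppA : ∀ x ∈ l.support, x ∈ A := fun x hx => hl hx
  have hmemN : (Finsupp.linearCombination 𝕜 v) lneg ∈
      Submodule.span 𝕜 (v '' {x | x ∈ A ∧ δ x < p}) := by
    rw [Finsupp.mem_span_image_iff_linearCombination]
    refine ⟨lneg, fun x hx => ?_, rfl⟩
    simp only [hlneg, Finsupp.support_filter, Finset.coe_filter, Set.mem_setOf_eq,
      Finset.mem_coe] at hx
    exact ⟨hsuppA x hx.1, hx.2⟩
  have hkerP : (e ^ p) ((Finsupp.linearCombination 𝕜 v) lpos) = 0 := by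
    have : (Finsupp.linearCombination 𝕜 v) lneg + (Finsupp.linearCombination 𝕜 v) lpos =
        (Finsupp.linearCombination 𝕜 v) l := by rw [← map_add, hsplit]
    have hN : (e ^ p) ((Finsupp.linearCombination 𝕜 v) lneg) = 0 := hsmall hmemN
    calc (e ^ p) ((Finsupp.linearCombination 𝕜 v) lpos)
        = (e ^ p) ((Finsupp.linearCombination 𝕜 v) lneg) +
          (e ^ p) ((Finsupp.linearCombination 𝕜 v) lpos) := by rw [hN, zero_add]
      _ = (e ^ p) ((Finsupp.linearCombination 𝕜 v) l) := by rw [← map_add, this]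
      _ = 0 := hw2
  have hsuppP : ∀ x ∈ lpos.support, x ∈ A ∧ p ≤ δ x := by
    intro x hx
    rw [hlpos, Finsupp.support_filter, Finset.mem_filter] at hx
    exact ⟨hsuppA x hx.1, by omega⟩
  have hcomb : (Finsupp.linearCombination 𝕜 (fun x => v (f^[p] x))) lpos =
      (e ^ p) ((Finsupp.linearCombination 𝕜 v) lpos) := by
    rw [Finsupp.linearCombination_apply, Finsupp.linearCombination_apply, map_finsuppSum]
    refine Finsupp.sum_congr fun x hx => ?_
    obtain ⟨hxA, hxd⟩ := hsuppP x hx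
    rw [map_smul, (iter_facts hs p x hxA hxd).2.2]
  have hind : LinearIndependent 𝕜
      ((fun x => v (f^[p] x)) ∘ (Subtype.val : {x | x ∈ A ∧ p ≤ δ x} → ι)) := by
    have hginj : Function.Injective
        (fun x : {x | x ∈ A ∧ p ≤ δ x} =>
          (⟨f^[p] (x : ι), hA (iter_facts hs p x x.2.1 x.2.2).1⟩ : I)) := by
      intro x y hxy
      have := iter_inj hs hinj p x.1 x.2.1 y.1 y.2.1 x.2.2 y.2.2 (Subtype.mk_eq_mk.1 hxy)
      exact Subtype.ext this
    exact hv.comp _ hginj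
  have hlpos0 : lpos = 0 := by
    refine linearIndepOn_iff.1 (linearIndependent_comp_subtype_iff.1 hind) lpos (fun x hx => (hsuppP x hx)) ?_
    rw [hcomb, hkerP]
  have : l = lneg := by rw [← hsplit, hlpos0, add_zero]
  rw [this]
  exact hmemN

lemma finrank_span_ncard (hv : LinearIndependent 𝕜 (fun x : I => v x)) (hfin : I.Finite)
    (hA : A ⊆ I) :
    Module.finrank 𝕜 ↥(Submodule.span 𝕜 (v '' A)) = A.ncard := by
  classical
  have hAfin : A.Finite := hfin.subset hA
  have indA : LinearIndependent 𝕜 (fun x : A => v x) := by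
    have := hv.comp (Set.inclusion hA) (Set.inclusion_injective hA)
    exact this
  have indim : LinearIndependent 𝕜 (fun x : ↥(v '' A) => (x : V)) := LinearIndepOn.id_image indA
  haveI : Fintype ↥(v '' A) := (hAfin.image v).fintype
  rw [finrank_span_set_eq_card (s := v '' A) indim, ← Set.ncard_eq_toFinset_card' (v '' A)]
  refine Set.ncard_image_of_injOn ?_
  rw [Set.injOn_iff_injective]
  exact indA.injective

end Key

section Concrete

variable (n : ℕ) (μ : ℕ → List ℕ) (σ : ℕ → ℕ → ℕ → ℕ)

/-- global position value of a box -/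
def gval (x : ℕ × ℕ × ℕ) : ℕ := σ x.1 x.2.1 x.2.2 + shift μ x.1

/-- global column (depth) of a box -/
def dep (x : ℕ × ℕ × ℕ) : ℕ := x.2.2 + ∑ k ∈ Finset.range x.1, (μ k).getD x.2.1 0

def prevIdx (i j : ℕ) : ℕ := Nat.findGreatest (fun i' => 0 < (μ i').getD j 0) (i - 1)

def fstep (x : ℕ × ℕ × ℕ) : ℕ × ℕ × ℕ :=
  match x with
  | (i, j, m+1) => (i, j, m)
  | (i, j, 0) => (prevIdx μ i j, j, (μ (prevIdx μ i j)).getD j 0 - 1)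

lemma gval_mk (i j m : ℕ) : gval μ σ (i, j, m) = σ i j m + shift μ i := rfl

lemma dep_mk (i j m : ℕ) :
    dep μ (i, j, m) = m + ∑ k ∈ Finset.range i, (μ k).getD j 0 := rfl

lemma fstep_succ (i j m : ℕ) : fstep μ (i, j, m + 1) = (i, j, m) := rfl

lemma fstep_zero (i j : ℕ) :
    fstep μ (i, j, 0) = (prevIdx μ i j, j, (μ (prevIdx μ i j)).getD j 0 - 1) := rfl

lemma getD_le_sum (l : List ℕ) (j : ℕ) : l.getD j 0 ≤ l.sum := by
  rcases lt_or_ge j l.length with h | h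
  · rw [List.getD_eq_getElem _ _ h]
    exact List.single_le_sum (fun x _ => Nat.zero_le x) _ (List.getElem_mem h)
  · rw [List.getD_eq_default _ _ h]
    exact Nat.zero_le _

lemma lt_length_of_getD_pos {l : List ℕ} {j : ℕ} (h : 0 < l.getD j 0) : j < l.length := by
  by_contra h'
  rw [List.getD_eq_default _ _ (le_of_not_gt h')] at h
  omega

lemma InIdx_finite : {x : ℕ × ℕ × ℕ | InIdx n μ x}.Finite := by
  apply Set.Finite.subset (Set.finite_Icc ((0:ℕ), (0:ℕ), (0:ℕ))
    ((n, maxLen n μ, (Finset.range n).sup fun k => (μ k).sum)))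
  intro x hx
  obtain ⟨h1, h2, h3⟩ := hx
  have hL : (μ x.1).length ≤ maxLen n μ :=
    Finset.le_sup (f := fun k => (μ k).length) (Finset.mem_range.2 h1)
  have hs : (μ x.1).getD x.2.1 0 ≤ (μ x.1).sum := getD_le_sum _ _
  have hss : (μ x.1).sum ≤ (Finset.range n).sup fun k => (μ k).sum :=
    Finset.le_sup (f := fun k => (μ k).sum) (Finset.mem_range.2 h1)
  have ha : ((0:ℕ), (0:ℕ), (0:ℕ)) ≤ x := by
    rw [Prod.le_def]
    exact ⟨Nat.zero_le _, by rw [Prod.le_def]; exact ⟨Nat.zero_le _, Nat.zero_le _⟩⟩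
  have hb : x ≤ (n, maxLen n μ, (Finset.range n).sup fun k => (μ k).sum) := by
    rw [Prod.le_def]
    constructor
    · show x.1 ≤ n; omega
    rw [Prod.le_def]
    constructor
    · show x.2.1 ≤ maxLen n μ; omega
    · show x.2.2 ≤ (Finset.range n).sup fun k => (μ k).sum; omega
  exact Set.mem_Icc.2 ⟨ha, hb⟩

lemma shift_mono : Monotone (shift μ) := fun a b h =>
  Finset.sum_le_sum_of_subset (Finset.range_subset_range.2 h)

lemma shift_succ (k : ℕ) : shift μ (k + 1) = shift μ k + (μ k).sum :=
  Finset.sum_range_succ _ _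

variable {n μ σ}

lemma gval_bounds (hσ : ∀ k < n, IsStdTableau (μ k) (σ k)) {x : ℕ × ℕ × ℕ}
    (hx : InIdx n μ x) :
    shift μ x.1 < gval μ σ x ∧ gval μ σ x ≤ shift μ (x.1 + 1) := by
  obtain ⟨h1, h2⟩ := (hσ x.1 hx.1).entry_mem x.2.1 x.2.2 hx.2.1 hx.2.2
  have := shift_succ μ x.1
  unfold gval
  omega

lemma gval_injOn (hσ : ∀ k < n, IsStdTableau (μ k) (σ k)) :
    Set.InjOn (gval μ σ) {x | InIdx n μ x} := by
  rintro ⟨i, j, m⟩ hx ⟨i', j', m'⟩ hy hxy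
  have hbx := gval_bounds hσ hx
  have hby := gval_bounds hσ hy
  rcases lt_trichotomy i i' with h | h | h
  · exfalso
    have := shift_mono μ (show i + 1 ≤ i' by omega)
    simp only [gval_mk] at hxy hbx hby
    omega
  · subst h
    have hσeq : σ i j m = σ i j' m' := by
      simp only [gval_mk] at hxy; omega
    obtain ⟨rfl, rfl⟩ := (hσ i hx.1).inj j m j' m' hx.2.1 hx.2.2 hy.2.1 hy.2.2 hσeq
    rfl
  · exfalso
    have := shift_mono μ (show i' + 1 ≤ i by omega)
    simp only [gval_mk] at hxy hbx hby
    omega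

lemma gval_surj (hσ : ∀ k < n, IsStdTableau (μ k) (σ k)) {a : ℕ} (h1 : 1 ≤ a)
    (h2 : a ≤ shift μ n) : ∃ x, InIdx n μ x ∧ gval μ σ x = a := by
  obtain ⟨k, hk, hlt, hle⟩ := exists_block' (fun k => (μ k).sum) n a h1 h2
  have hsh : shift μ k = ∑ k' ∈ Finset.range k, (μ k').sum := rfl
  obtain ⟨r, c, hr, hc, hrc⟩ := (hσ k hk).exists_box (a - shift μ k) (by omega) (by omega)
  exact ⟨(k, r, c), ⟨hk, hr, hc⟩, by rw [gval_mk, hrc]; omega⟩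

lemma prev_spec {i j : ℕ} (h : 0 < ∑ k ∈ Finset.range i, (μ k).getD j 0) :
    prevIdx μ i j < i ∧ 0 < (μ (prevIdx μ i j)).getD j 0 ∧
      ∀ i'', prevIdx μ i j < i'' → i'' < i → (μ i'').getD j 0 = 0 := by
  have hex : ∃ i₀, i₀ < i ∧ 0 < (μ i₀).getD j 0 := by
    by_contra hno
    push_neg at hno
    have : ∑ k ∈ Finset.range i, (μ k).getD j 0 = 0 :=
      Finset.sum_eq_zero fun k hk => by
        have := hno k (Finset.mem_range.1 hk); omega
    omega
  obtain ⟨i₀, hi₀, hP⟩ := hex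
  have hspec : 0 < (μ (prevIdx μ i j)).getD j 0 :=
    Nat.findGreatest_spec (P := fun i' => 0 < (μ i').getD j 0) (m := i₀) (n := i - 1)
      (by omega) hP
  have hle : prevIdx μ i j ≤ i - 1 :=
    Nat.findGreatest_le (P := fun i' => 0 < (μ i').getD j 0) (i - 1)
  refine ⟨by omega, hspec, fun i'' hi1 hi2 => ?_⟩
  by_contra hne
  have : i'' ≤ prevIdx μ i j :=
    Nat.le_findGreatest (P := fun i' => 0 < (μ i').getD j 0) (by omega) (by omega)
  omega

section WithRep

variable {𝕜 V : Type*} [Field 𝕜] [AddCommGroup V] [Module 𝕜 V]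
  {v : ℕ × ℕ × ℕ → V} {e0 e1 : V →ₗ[𝕜] V}

lemma e_zero (hrep : IsRep n μ v e0 e1) {x : ℕ × ℕ × ℕ} (hx : InIdx n μ x)
    (h : dep μ x = 0) : (e0 + e1) (v x) = 0 := by
  obtain ⟨i, j, m⟩ := x
  rw [dep_mk] at h
  have hm : m = 0 := by omega
  subst hm
  rw [LinearMap.add_apply, hrep.e0_bot i j hx, hrep.e1_none i j hx ?_, add_zero]
  intro i' hi'
  have := Finset.sum_eq_zero_iff.1 (by omega :
    ∑ k ∈ Finset.range i, (μ k).getD j 0 = 0) i' (Finset.mem_range.2 hi')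
  exact this

lemma e_step (hrep : IsRep n μ v e0 e1) (hσ : ∀ k < n, IsStdTableau (μ k) (σ k))
    {x : ℕ × ℕ × ℕ} (hx : InIdx n μ x) (h : 0 < dep μ x) :
    InIdx n μ (fstep μ x) ∧ dep μ (fstep μ x) + 1 = dep μ x ∧
      gval μ σ (fstep μ x) < gval μ σ x ∧ (e0 + e1) (v x) = v (fstep μ x) := by
  obtain ⟨i, j, m⟩ := x
  rcases m with _ | m
  · -- m = 0
    have hS : 0 < ∑ k ∈ Finset.range i, (μ k).getD j 0 := by
      rw [dep_mk] at h; omega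
    obtain ⟨ha_lt, haP, hmax⟩ := prev_spec hS
    have hin : i < n := hx.1
    have han : prevIdx μ i j < n := by omega
    have hjlen : j < (μ (prevIdx μ i j)).length := lt_length_of_getD_pos haP
    have hsplit : ∑ k ∈ Finset.range i, (μ k).getD j 0 =
        (∑ k ∈ Finset.range (prevIdx μ i j), (μ k).getD j 0) +
          (μ (prevIdx μ i j)).getD j 0 := by
      have hc : (∑ k ∈ Finset.Ico 0 (prevIdx μ i j + 1), (μ k).getD j 0) +
          ∑ k ∈ Finset.Ico (prevIdx μ i j + 1) i, (μ k).getD j 0 =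
          ∑ k ∈ Finset.Ico 0 i, (μ k).getD j 0 :=
        Finset.sum_Ico_consecutive _ (Nat.zero_le _) (by omega)
      have hz : ∑ k ∈ Finset.Ico (prevIdx μ i j + 1) i, (μ k).getD j 0 = 0 :=
        Finset.sum_eq_zero fun k hk => hmax k (by
          have := (Finset.mem_Ico.1 hk).1; omega) (Finset.mem_Ico.1 hk).2
      simp only [← Finset.range_eq_Ico] at hc
      rw [Finset.sum_range_succ] at hc
      omega
    refine ⟨by rw [fstep_zero]; exact ⟨han, hjlen, Nat.sub_lt haP one_pos⟩, ?_, ?_, ?_⟩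
    · rw [fstep_zero, dep_mk, dep_mk]
      omega
    · rw [fstep_zero, gval_mk, gval_mk]
      have h1 := ((hσ _ han).entry_mem j ((μ (prevIdx μ i j)).getD j 0 - 1) hjlen
        (by omega)).2
      have h2 := ((hσ i hin).entry_mem j 0 hx.2.1 hx.2.2).1
      have h3 : shift μ (prevIdx μ i j + 1) ≤ shift μ i := shift_mono μ (by omega)
      have h4 := shift_succ μ (prevIdx μ i j)
      omega
    · rw [fstep_zero, LinearMap.add_apply, hrep.e0_bot i j hx,
        hrep.e1_link i (prevIdx μ i j) j hx ha_lt haP hmax, zero_add]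
  · -- m = m' + 1
    have hx2 : i < n ∧ j < (μ i).length ∧ m + 1 < (μ i).getD j 0 := hx
    obtain ⟨hin, hj2, hm2⟩ := hx2
    refine ⟨⟨hin, hj2, Nat.lt_of_succ_lt hm2⟩, ?_, ?_, ?_⟩
    · rw [fstep_succ, dep_mk, dep_mk]
      omega
    · rw [fstep_succ, gval_mk, gval_mk]
      have := (hσ i hin).row_lt j m (m+1) hj2 (Nat.lt_succ_self m) hm2
      omega
    · rw [fstep_succ, LinearMap.add_apply, hrep.e0_succ i j m hx, hrep.e1_pos i j m hx,
        add_zero]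

lemma fstep_injOn {x y : ℕ × ℕ × ℕ} (hx : InIdx n μ x) (hy : InIdx n μ y)
    (hdx : 0 < dep μ x) (hdy : 0 < dep μ y) (hf : fstep μ x = fstep μ y) : x = y := by
  obtain ⟨i, j, m⟩ := x; obtain ⟨i', j', m'⟩ := y
  rcases m with _ | m <;> rcases m' with _ | m'
  · -- both zero
    have hSx : 0 < ∑ k ∈ Finset.range i, (μ k).getD j 0 := by rw [dep_mk] at hdx; omega
    have hSy : 0 < ∑ k ∈ Finset.range i', (μ k).getD j' 0 := by rw [dep_mk] at hdy; omega
    obtain ⟨hax, hPx, hmx⟩ := prev_spec hSx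
    obtain ⟨hay, hPy, hmy⟩ := prev_spec hSy
    rw [fstep_zero, fstep_zero, Prod.mk.injEq, Prod.mk.injEq] at hf
    obtain ⟨h1, h2, h3⟩ := hf
    subst h2
    rw [h1] at hax hPx hmx
    have hxc : 0 < (μ i).getD j 0 := hx.2.2
    have hyc : 0 < (μ i').getD j 0 := hy.2.2
    rcases lt_trichotomy i i' with h | h | h
    · exfalso
      have := hmy i (by omega) h
      omega
    · rw [h]
    · exfalso
      have := hmx i' (by omega) h
      omega
  · -- x zero, y succ
    exfalso
    rw [fstep_zero, fstep_succ, Prod.mk.injEq, Prod.mk.injEq] at hf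
    obtain ⟨h1, h2, h3⟩ := hf
    have hSx : 0 < ∑ k ∈ Finset.range i, (μ k).getD j 0 := by rw [dep_mk] at hdx; omega
    obtain ⟨hax, hPx, hmx⟩ := prev_spec hSx
    subst h2
    have hyc : m' + 1 < (μ i').getD j 0 := hy.2.2
    rw [h1] at hPx h3
    omega
  · -- x succ, y zero
    exfalso
    rw [fstep_zero, fstep_succ, Prod.mk.injEq, Prod.mk.injEq] at hf
    obtain ⟨h1, h2, h3⟩ := hf
    have hSy : 0 < ∑ k ∈ Finset.range i', (μ k).getD j' 0 := by rw [dep_mk] at hdy; omega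
    obtain ⟨hay, hPy, hmy⟩ := prev_spec hSy
    subst h2
    have hxc : m + 1 < (μ i).getD j 0 := hx.2.2
    rw [← h1] at hPy h3
    omega
  · -- both succ
    rw [fstep_succ, fstep_succ, Prod.mk.injEq, Prod.mk.injEq] at hf
    obtain ⟨h1, h2, h3⟩ := hf
    subst h1; subst h2; subst h3
    rfl

lemma pSum_shift (k : ℕ) : pSum (fun k => (μ k).sum) k = shift μ k := rfl

lemma LSidx_le {lam : ℕ → ℕ} {i : ℕ} : LSidx n lam i ≤ n := Nat.findGreatest_le n

lemma LSidx_pSum_lt {lam : ℕ → ℕ} {i : ℕ} (h : 0 < LSidx n lam i) :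
    pSum lam (LSidx n lam i) < i := by
  by_contra hc
  have h2 : ¬ (Nat.findGreatest (fun j => pSum lam j < i) n = 0) := by
    unfold LSidx at h; omega
  rw [Nat.findGreatest_eq_zero_iff] at h2
  push_neg at h2
  obtain ⟨m, hm0, hmn, hPm⟩ := h2
  exact hc (Nat.findGreatest_spec (P := fun j => pSum lam j < i) hmn hPm)

lemma LSidx_pSum_le {lam : ℕ → ℕ} {i : ℕ} : pSum lam (LSidx n lam i) ≤ i := by
  rcases Nat.eq_zero_or_pos (LSidx n lam i) with h | h
  · rw [h]; simp [pSum]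
  · exact le_of_lt (LSidx_pSum_lt h)

lemma LSidx_ge {lam : ℕ → ℕ} {i k : ℕ} (hk : k ≤ n) (h : pSum lam k < i) :
    k ≤ LSidx n lam i := Nat.le_findGreatest hk h

lemma Sbar_eq (hσ : ∀ k < n, IsStdTableau (μ k) (σ k)) (i : ℕ) :
    ((⋃ k ∈ Finset.range (LSidx n (fun k => (μ k).sum) i),
        {x : ℕ × ℕ × ℕ | x.1 = k ∧ InIdx n μ x}) ∪
      {x : ℕ × ℕ × ℕ | x.1 = LSidx n (fun k => (μ k).sum) i ∧ InIdx n μ x ∧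
        σ (LSidx n (fun k => (μ k).sum) i) x.2.1 x.2.2 ≤
          i - pSum (fun k => (μ k).sum) (LSidx n (fun k => (μ k).sum) i)}) =
    {x : ℕ × ℕ × ℕ | InIdx n μ x ∧ gval μ σ x ≤ i} := by
  set j := LSidx n (fun k => (μ k).sum) i with hj
  have hjle : j ≤ n := by rw [hj]; exact LSidx_le
  have hple : shift μ j ≤ i := by
    rw [hj, ← pSum_shift]; exact LSidx_pSum_le
  ext x
  simp only [Set.mem_union, Set.mem_iUnion, Set.mem_setOf_eq, Finset.mem_range]
  constructor
  · rintro (⟨k, hk, rfl, hxI⟩ | ⟨hx1, hxI, hxσ⟩)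
    · refine ⟨hxI, ?_⟩
      have hb := (gval_bounds hσ hxI).2
      have h1 : shift μ (x.1 + 1) ≤ shift μ j := shift_mono μ (by omega)
      have h2 : shift μ j < i := by
        rw [hj, ← pSum_shift]
        exact LSidx_pSum_lt (by rw [← hj]; omega)
      omega
    · refine ⟨hxI, ?_⟩
      have hge : gval μ σ x = σ x.1 x.2.1 x.2.2 + shift μ x.1 := rfl
      rw [← pSum_shift] at hple
      rw [hge, hx1, ← pSum_shift]
      omega
  · rintro ⟨hxI, hg⟩
    have hb := (gval_bounds hσ hxI).1
    have hge : gval μ σ x = σ x.1 x.2.1 x.2.2 + shift μ x.1 := rfl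
    have hx1n : x.1 < n := hxI.1
    have hxle : x.1 ≤ j := by
      rw [hj]
      exact LSidx_ge (by omega) (by rw [pSum_shift]; omega)
    rcases lt_or_eq_of_le hxle with h | h
    · exact Or.inl ⟨x.1, h, rfl, hxI⟩
    · refine Or.inr ⟨h, hxI, ?_⟩
      rw [hge, h] at hg
      rw [pSum_shift]
      omega

lemma ncard_Sk (hσ : ∀ k < n, IsStdTableau (μ k) (σ k)) {k d : ℕ} (hk : k < n)
    (hd : d ≤ (μ k).sum) :
    {x : ℕ × ℕ × ℕ | x.1 = k ∧ InIdx n μ x ∧ σ k x.2.1 x.2.2 ≤ d}.ncard = d := by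
  have hinj : Set.InjOn (fun x : ℕ × ℕ × ℕ => σ k x.2.1 x.2.2)
      {x : ℕ × ℕ × ℕ | x.1 = k ∧ InIdx n μ x ∧ σ k x.2.1 x.2.2 ≤ d} := by
    rintro x ⟨hx1, hxI, _⟩ y ⟨hy1, hyI, _⟩ heq
    have hxj : x.2.1 < (μ k).length := by rw [← hx1]; exact hxI.2.1
    have hxm : x.2.2 < (μ k).getD x.2.1 0 := by rw [← hx1]; exact hxI.2.2
    have hyj : y.2.1 < (μ k).length := by rw [← hy1]; exact hyI.2.1
    have hym : y.2.2 < (μ k).getD y.2.1 0 := by rw [← hy1]; exact hyI.2.2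
    obtain ⟨h4, h5⟩ := (hσ k hk).inj x.2.1 x.2.2 y.2.1 y.2.2 hxj hxm hyj hym heq
    rw [Prod.ext_iff, Prod.ext_iff]
    exact ⟨hx1.trans hy1.symm, h4, h5⟩
  have himg : (fun x : ℕ × ℕ × ℕ => σ k x.2.1 x.2.2) ''
      {x : ℕ × ℕ × ℕ | x.1 = k ∧ InIdx n μ x ∧ σ k x.2.1 x.2.2 ≤ d} = Set.Icc 1 d := by
    ext a
    constructor
    · rintro ⟨x, ⟨hx1, hxI, hxd⟩, rfl⟩
      have hxj : x.2.1 < (μ k).length := by rw [← hx1]; exact hxI.2.1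
      have hxm : x.2.2 < (μ k).getD x.2.1 0 := by rw [← hx1]; exact hxI.2.2
      exact Set.mem_Icc.2 ⟨((hσ k hk).entry_mem x.2.1 x.2.2 hxj hxm).1, hxd⟩
    · intro ha
      rw [Set.mem_Icc] at ha
      obtain ⟨r, c, hr, hc, hrc⟩ := (hσ k hk).exists_box a ha.1 (le_trans ha.2 hd)
      exact ⟨(k, r, c), ⟨rfl, ⟨hk, hr, hc⟩, by show σ k r c ≤ d; omega⟩, hrc⟩
  rw [← Set.ncard_image_of_injOn hinj, himg, ← Finset.coe_Icc, Set.ncard_coe_finset,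
    Nat.card_Icc]
  omega

lemma ncard_Sk_cols (hσ : ∀ k < n, IsStdTableau (μ k) (σ k)) {k : ℕ} (hk : k < n)
    (d p : ℕ) :
    {x : ℕ × ℕ × ℕ |
        x ∈ {y : ℕ × ℕ × ℕ | y.1 = k ∧ InIdx n μ y ∧ σ k y.2.1 y.2.2 ≤ d} ∧
        x.2.2 < p}.ncard = entriesInCols (μ k) (σ k) d p := by
  unfold entriesInCols
  have hinj : Set.InjOn (fun x : ℕ × ℕ × ℕ => σ k x.2.1 x.2.2)
      {x : ℕ × ℕ × ℕ |
        x ∈ {y : ℕ × ℕ × ℕ | y.1 = k ∧ InIdx n μ y ∧ σ k y.2.1 y.2.2 ≤ d} ∧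
        x.2.2 < p} := by
    rintro x ⟨⟨hx1, hxI, _⟩, _⟩ y ⟨⟨hy1, hyI, _⟩, _⟩ heq
    have hxj : x.2.1 < (μ k).length := by rw [← hx1]; exact hxI.2.1
    have hxm : x.2.2 < (μ k).getD x.2.1 0 := by rw [← hx1]; exact hxI.2.2
    have hyj : y.2.1 < (μ k).length := by rw [← hy1]; exact hyI.2.1
    have hym : y.2.2 < (μ k).getD y.2.1 0 := by rw [← hy1]; exact hyI.2.2
    obtain ⟨h4, h5⟩ := (hσ k hk).inj x.2.1 x.2.2 y.2.1 y.2.2 hxj hxm hyj hym heq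
    rw [Prod.ext_iff, Prod.ext_iff]
    exact ⟨hx1.trans hy1.symm, h4, h5⟩
  have himg : (fun x : ℕ × ℕ × ℕ => σ k x.2.1 x.2.2) ''
      {x : ℕ × ℕ × ℕ |
        x ∈ {y : ℕ × ℕ × ℕ | y.1 = k ∧ InIdx n μ y ∧ σ k y.2.1 y.2.2 ≤ d} ∧
        x.2.2 < p} =
      {a : ℕ | 1 ≤ a ∧ a ≤ d ∧
        ∃ r c, r < (μ k).length ∧ c < (μ k).getD r 0 ∧ c < p ∧ σ k r c = a} := by
    ext a
    constructor
    · rintro ⟨x, ⟨⟨hx1, hxI, hxd⟩, hxp⟩, rfl⟩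
      have hxj : x.2.1 < (μ k).length := by rw [← hx1]; exact hxI.2.1
      have hxm : x.2.2 < (μ k).getD x.2.1 0 := by rw [← hx1]; exact hxI.2.2
      exact ⟨((hσ k hk).entry_mem x.2.1 x.2.2 hxj hxm).1, hxd,
        x.2.1, x.2.2, hxj, hxm, hxp, rfl⟩
    · rintro ⟨ha1, had, r, c, hr, hc, hcp, hrc⟩
      exact ⟨(k, r, c), ⟨⟨rfl, ⟨hk, hr, hc⟩, by show σ k r c ≤ d; omega⟩,
        by show c < p; omega⟩, hrc⟩
  rw [← himg, Set.ncard_image_of_injOn hinj]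

lemma ncard_Ak_cols {k : ℕ} (hk : k < n) (p : ℕ) :
    {x : ℕ × ℕ × ℕ | x ∈ {y : ℕ × ℕ × ℕ | y.1 = k ∧ InIdx n μ y} ∧ x.2.2 < p}.ncard =
      ∑ j ∈ Finset.range (μ k).length, min p ((μ k).getD j 0) := by
  classical
  have hset : {x : ℕ × ℕ × ℕ | x ∈ {y : ℕ × ℕ × ℕ | y.1 = k ∧ InIdx n μ y} ∧
        x.2.2 < p} =
      (fun s : (_ : ℕ) × ℕ => (k, s.1, s.2)) ''
        ↑((Finset.range (μ k).length).sigma fun j =>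
          Finset.range (min p ((μ k).getD j 0))) := by
    ext x
    constructor
    · rintro ⟨⟨hx1, hxI⟩, hxp⟩
      have hxj : x.2.1 < (μ k).length := by rw [← hx1]; exact hxI.2.1
      have hxm : x.2.2 < (μ k).getD x.2.1 0 := by rw [← hx1]; exact hxI.2.2
      refine ⟨⟨x.2.1, x.2.2⟩, ?_, ?_⟩
      · simp only [Finset.mem_coe, Finset.mem_sigma, Finset.mem_range]
        exact ⟨hxj, lt_min hxp hxm⟩
      · show (k, x.2.1, x.2.2) = x
        rw [← hx1]
    · rintro ⟨⟨j, m⟩, hs, rfl⟩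
      simp only [Finset.mem_coe, Finset.mem_sigma, Finset.mem_range] at hs
      exact ⟨⟨rfl, ⟨hk, hs.1, by show m < (μ k).getD j 0; omega⟩⟩, by show m < p; omega⟩
  have hinj : Set.InjOn (fun s : (_ : ℕ) × ℕ => (k, s.1, s.2))
      ↑((Finset.range (μ k).length).sigma fun j =>
        Finset.range (min p ((μ k).getD j 0))) := by
    rintro ⟨j, m⟩ _ ⟨j', m'⟩ _ h
    simp only [Prod.mk.injEq] at h
    obtain ⟨rfl, rfl⟩ := h.2
    rfl
  rw [hset, Set.ncard_image_of_injOn hinj, Set.ncard_coe_finset, Finset.card_sigma]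
  simp

lemma ncard_Sbar (hσ : ∀ k < n, IsStdTableau (μ k) (σ k)) {i : ℕ} (hi : i ≤ shift μ n) :
    {x : ℕ × ℕ × ℕ | InIdx n μ x ∧ gval μ σ x ≤ i}.ncard = i := by
  have himg : gval μ σ '' {x : ℕ × ℕ × ℕ | InIdx n μ x ∧ gval μ σ x ≤ i} =
      Set.Icc 1 i := by
    ext a
    constructor
    · rintro ⟨x, ⟨hxI, hxi⟩, rfl⟩
      exact Set.mem_Icc.2 ⟨by have := (gval_bounds hσ hxI).1; omega, hxi⟩
    · intro ha
      rw [Set.mem_Icc] at ha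
      obtain ⟨x, hxI, rfl⟩ := gval_surj hσ ha.1 (le_trans ha.2 hi)
      exact ⟨x, ⟨hxI, ha.2⟩, rfl⟩
  rw [← Set.ncard_image_of_injOn ((gval_injOn hσ).mono fun x hx => hx.1), himg,
    ← Finset.coe_Icc, Set.ncard_coe_finset, Nat.card_Icc]
  omega

lemma sumShape_length : (sumShape n μ).length = maxLen n μ := List.length_ofFn

lemma sumShape_getD {r : ℕ} (hr : r < maxLen n μ) :
    (sumShape n μ).getD r 0 = ∑ k ∈ Finset.range n, (μ k).getD r 0 := by
  have hlen : r < (sumShape n μ).length := by rw [sumShape_length]; exact hr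
  rw [List.getD_eq_getElem _ _ hlen]
  simp [sumShape]

lemma stkRow_prefix_length (T : ℕ → ℕ → ℕ → ℕ) (r q : ℕ) :
    (((List.range q).map fun k =>
      (List.range ((μ k).getD r 0)).map fun c => T k r c + shift μ k).flatten).length =
    ∑ k ∈ Finset.range q, (μ k).getD r 0 := by
  rw [List.length_flatten, List.map_map]
  rw [show (List.length ∘ fun k => (List.range ((μ k).getD r 0)).map
      fun c => T k r c + shift μ k) = fun k => (μ k).getD r 0 from funext fun k => by simp]
  exact list_range_map_sum _ _

lemma stkEntry_eq (T : ℕ → ℕ → ℕ → ℕ) {k r m : ℕ} (hk : k < n)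
    (hm : m < (μ k).getD r 0) :
    stkEntry n μ T r ((∑ k' ∈ Finset.range k, (μ k').getD r 0) + m) =
      T k r m + shift μ k := by
  unfold stkEntry stkRow
  obtain ⟨q, hq⟩ : ∃ q, n = (k + 1) + q := ⟨n - (k + 1), by omega⟩
  rw [hq, List.range_add, List.map_append, List.flatten_append]
  rw [List.getD_append _ _ _ _ (by
    rw [stkRow_prefix_length, Finset.sum_range_succ]; omega)]
  rw [List.range_succ, List.map_append, List.flatten_append]
  rw [List.getD_append_right _ _ _ _ (by rw [stkRow_prefix_length]; omega)]
  rw [stkRow_prefix_length]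
  rw [show (∑ k' ∈ Finset.range k, (μ k').getD r 0) + m -
      (∑ k' ∈ Finset.range k, (μ k').getD r 0) = m by omega]
  simp only [List.map_cons, List.map_nil, List.flatten_cons, List.flatten_nil,
    List.append_nil]
  rw [List.getD_eq_getElem _ _ (by simpa using hm)]
  simp

lemma ncard_Sbar_cols (hσ : ∀ k < n, IsStdTableau (μ k) (σ k)) (i p : ℕ) :
    {x : ℕ × ℕ × ℕ | x ∈ {y : ℕ × ℕ × ℕ | InIdx n μ y ∧ gval μ σ y ≤ i} ∧
        dep μ x < p}.ncard =
      entriesInCols (sumShape n μ) (stkEntry n μ σ) i p := by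
  unfold entriesInCols
  have himg : gval μ σ '' {x : ℕ × ℕ × ℕ |
        x ∈ {y : ℕ × ℕ × ℕ | InIdx n μ y ∧ gval μ σ y ≤ i} ∧ dep μ x < p} =
      {a : ℕ | 1 ≤ a ∧ a ≤ i ∧ ∃ r c, r < (sumShape n μ).length ∧
        c < (sumShape n μ).getD r 0 ∧ c < p ∧ stkEntry n μ σ r c = a} := by
    ext a
    constructor
    · rintro ⟨x, ⟨⟨hxI, hxi⟩, hxp⟩, rfl⟩
      have hk : x.1 < n := hxI.1
      have hrlen : x.2.1 < maxLen n μ :=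
        lt_of_lt_of_le hxI.2.1 (Finset.le_sup (f := fun k => (μ k).length)
          (Finset.mem_range.2 hk))
      have hdepx : dep μ x = x.2.2 + ∑ k ∈ Finset.range x.1, (μ k).getD x.2.1 0 := rfl
      have hgx : gval μ σ x = σ x.1 x.2.1 x.2.2 + shift μ x.1 := rfl
      refine ⟨by have := (gval_bounds hσ hxI).1; omega, hxi,
        x.2.1, (∑ k' ∈ Finset.range x.1, (μ k').getD x.2.1 0) + x.2.2, ?_, ?_, ?_, ?_⟩
      · rw [sumShape_length]; exact hrlen
      · rw [sumShape_getD hrlen]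
        have hsub : ∑ k' ∈ Finset.range (x.1 + 1), (μ k').getD x.2.1 0 ≤
            ∑ k' ∈ Finset.range n, (μ k').getD x.2.1 0 :=
          Finset.sum_le_sum_of_subset (Finset.range_subset_range.2 (by omega))
        rw [Finset.sum_range_succ] at hsub
        have := hxI.2.2
        omega
      · omega
      · rw [stkEntry_eq σ hk hxI.2.2, hgx]
    · rintro ⟨ha1, hai, r, c, hr, hc, hcp, hstk⟩
      rw [sumShape_length] at hr
      rw [sumShape_getD hr] at hc
      obtain ⟨k, hk, m, hm, rfl⟩ := exists_block (fun k' => (μ k').getD r 0) n c hc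
      have hm' : m < (μ k).getD r 0 := hm
      have hgd : 0 < (μ k).getD r 0 := by omega
      have hxI : InIdx n μ (k, r, m) := ⟨hk, lt_length_of_getD_pos hgd, hm'⟩
      have hg : gval μ σ (k, r, m) = stkEntry n μ σ r
          ((∑ k' ∈ Finset.range k, (μ k').getD r 0) + m) := (stkEntry_eq σ hk hm').symm
      refine ⟨(k, r, m), ⟨⟨hxI, by rw [hg, hstk]; exact hai⟩, ?_⟩, by rw [hg, hstk]⟩
      rw [dep_mk]
      omega
  rw [← himg, Set.ncard_image_of_injOn ((gval_injOn hσ).mono fun x hx => hx.1.1)]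

lemma LSflag_span {𝕜' V' : Type*} [Field 𝕜'] [AddCommGroup V'] [Module 𝕜' V']
    (v : ℕ × ℕ × ℕ → V') (hσ : ∀ k < n, IsStdTableau (μ k) (σ k))
    (Vsub : ℕ → Submodule 𝕜' V') (F : ℕ → ℕ → Submodule 𝕜' V')
    (hVsub : ∀ k, Vsub k = Submodule.span 𝕜' (v '' {x | x.1 = k ∧ InIdx n μ x}))
    (hFdef : ∀ k d, F k d = Submodule.span 𝕜'
      (v '' {x | x.1 = k ∧ InIdx n μ x ∧ σ k x.2.1 x.2.2 ≤ d})) (i : ℕ) :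
    LSflag n (fun k => (μ k).sum) Vsub F i =
      Submodule.span 𝕜' (v '' {x : ℕ × ℕ × ℕ | InIdx n μ x ∧ gval μ σ x ≤ i}) := by
  unfold LSflag
  rw [Finset.sum_congr rfl (fun k _ => hVsub k), hFdef, sum_span_eq,
    Submodule.add_eq_sup, ← Submodule.span_union, ← Set.image_iUnion₂, ← Set.image_union,
    Sbar_eq hσ i]

lemma e0_zero (hrep : IsRep n μ v e0 e1) {x : ℕ × ℕ × ℕ} (hxI : InIdx n μ x)
    (h : x.2.2 = 0) : e0 (v x) = 0 := by
  obtain ⟨i, j, m⟩ := x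
  have hm : m = 0 := h
  subst hm
  exact hrep.e0_bot i j hxI

lemma e0_step (hrep : IsRep n μ v e0 e1) (hσ : ∀ k < n, IsStdTableau (μ k) (σ k))
    {x : ℕ × ℕ × ℕ} (hxI : InIdx n μ x) (h : 0 < x.2.2) :
    InIdx n μ (x.1, x.2.1, x.2.2 - 1) ∧ (x.2.2 - 1) + 1 = x.2.2 ∧
      σ x.1 x.2.1 (x.2.2 - 1) < σ x.1 x.2.1 x.2.2 ∧
      e0 (v x) = v (x.1, x.2.1, x.2.2 - 1) := by
  obtain ⟨i, j, m⟩ := x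
  rcases m with _ | m
  · have h' : (0 : ℕ) < 0 := h
    omega
  · have hin : i < n := hxI.1
    have hj2 : j < (μ i).length := hxI.2.1
    have hm2 : m + 1 < (μ i).getD j 0 := hxI.2.2
    refine ⟨⟨hin, hj2, Nat.lt_of_succ_lt hm2⟩,
      show m + 1 - 1 + 1 = m + 1 by omega, ?_, ?_⟩
    · show σ i j m < σ i j (m + 1)
      exact (hσ i hin).row_lt j m (m + 1) hj2 (Nat.lt_succ_self m) hm2
    · show e0 (v (i, j, m + 1)) = v (i, j, m)
      exact hrep.e0_succ i j m hxI

lemma e0_inj {x y : ℕ × ℕ × ℕ} (hx : 0 < x.2.2) (hy : 0 < y.2.2)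
    (h : (x.1, x.2.1, x.2.2 - 1) = (y.1, y.2.1, y.2.2 - 1)) : x = y := by
  obtain ⟨i, j, m⟩ := x; obtain ⟨i', j', m'⟩ := y
  have hx' : 0 < m := hx
  have hy' : 0 < m' := hy
  have h' : (i, j, m - 1) = (i', j', m' - 1) := h
  rw [Prod.mk.injEq, Prod.mk.injEq] at h'
  obtain ⟨h1, h2, h3⟩ := h'
  subst h1; subst h2
  have hm : m = m' := by omega
  rw [hm]

end WithRep

end Concrete

end SpringerAux


/-- For the explicit representative `e = e0 + e1`, and standard tableaux
`σ k ∈ Std(μ k)`, define flags `F k d = span{v (k,l,m) : σ k (l,m) ≤ d}` of the subspaces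
`V_k = span{v (k,l,m)}`. Then (i) each `F k` is a full flag of `V_k` lying in the Springer
fibre of `e0` with Spaltenstein invariant `σ k` (w.r.t. `e0|_{V_k}`, which has Jordan type
`μ k`); and (ii) the Lusztig–Spaltenstein flag `LS(F 0, ..., F (n-1))` is a full flag of `V`
lying in the Springer fibre of `e` with Spaltenstein invariant `stk(σ 0, ..., σ (n-1))`. -/
theorem representative_LSflag_spaltenstein_invariant
    {𝕜 V : Type*} [Field 𝕜] [AddCommGroup V] [Module 𝕜 V]
    (n : ℕ) (μ : ℕ → List ℕ)
    (hpart : ∀ i < n, IsPartitionL (μ i)) (hcomp : ∀ i < n, 0 < (μ i).sum)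
    (v : ℕ × ℕ × ℕ → V) (e0 e1 : V →ₗ[𝕜] V) (hrep : IsRep n μ v e0 e1)
    (σ : ℕ → ℕ → ℕ → ℕ) (hσ : ∀ k < n, IsStdTableau (μ k) (σ k))
    (Vsub : ℕ → Submodule 𝕜 V)
    (hVsub : ∀ k, Vsub k = Submodule.span 𝕜 (v '' {x | x.1 = k ∧ InIdx n μ x}))
    (F : ℕ → ℕ → Submodule 𝕜 V)
    (hFdef : ∀ k d, F k d = Submodule.span 𝕜
      (v '' {x | x.1 = k ∧ InIdx n μ x ∧ σ k x.2.1 x.2.2 ≤ d})) :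
    (∀ k < n, IsFlagOf (Vsub k) ((μ k).sum) (F k)) ∧
    (∀ k < n, ∀ d, Submodule.map e0 (F k (d + 1)) ≤ F k d) ∧
    (∀ k < n, ∀ p : ℕ, Module.finrank 𝕜 ↥(Vsub k ⊓ LinearMap.ker (e0 ^ p)) =
      ∑ j ∈ Finset.range (μ k).length, min p ((μ k).getD j 0)) ∧
    (∀ k < n, ∀ d ≤ (μ k).sum, ∀ p : ℕ,
      Module.finrank 𝕜 ↥(F k d ⊓ LinearMap.ker (e0 ^ p)) =
        entriesInCols (μ k) (σ k) d p) ∧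
    IsFullFlag (∑ k ∈ Finset.range n, (μ k).sum)
      (LSflag n (fun k => (μ k).sum) Vsub F) ∧
    (∀ i, Submodule.map (e0 + e1) (LSflag n (fun k => (μ k).sum) Vsub F (i + 1)) ≤
      LSflag n (fun k => (μ k).sum) Vsub F i) ∧
    (∀ i ≤ ∑ k ∈ Finset.range n, (μ k).sum, ∀ p : ℕ,
      Module.finrank 𝕜
        ↥(LSflag n (fun k => (μ k).sum) Vsub F i ⊓ LinearMap.ker ((e0 + e1) ^ p)) =
      entriesInCols (sumShape n μ) (stkEntry n μ σ) i p) := by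
  classical
  have hfin := SpringerAux.InIdx_finite n μ
  have hv : LinearIndependent 𝕜
      (fun x : {x : ℕ × ℕ × ℕ | InIdx n μ x} => v x) := hrep.indep
  -- Part 1
  have part1 : ∀ k < n, IsFlagOf (Vsub k) ((μ k).sum) (F k) := by
    intro k hk
    constructor
    · intro d d' hdd'
      rw [hFdef, hFdef]
      exact Submodule.span_mono (Set.image_mono fun x hx =>
        ⟨hx.1, hx.2.1, le_trans hx.2.2 hdd'⟩)
    · intro d
      rw [hFdef, hVsub]
      exact Submodule.span_mono (Set.image_mono fun x hx => ⟨hx.1, hx.2.1⟩)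
    · rw [hFdef]
      have hempty : {x : ℕ × ℕ × ℕ | x.1 = k ∧ InIdx n μ x ∧ σ k x.2.1 x.2.2 ≤ 0} =
          ∅ := by
        ext x
        simp only [Set.mem_setOf_eq, Set.mem_empty_iff_false, iff_false]
        rintro ⟨hx1, hxI, hx0⟩
        have hxj : x.2.1 < (μ k).length := by rw [← hx1]; exact hxI.2.1
        have hxm : x.2.2 < (μ k).getD x.2.1 0 := by rw [← hx1]; exact hxI.2.2
        have := ((hσ k hk).entry_mem x.2.1 x.2.2 hxj hxm).1
        omega
      rw [hempty, Set.image_empty, Submodule.span_empty]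
    · rw [hFdef, hVsub]
      have hfull : {x : ℕ × ℕ × ℕ | x.1 = k ∧ InIdx n μ x ∧
          σ k x.2.1 x.2.2 ≤ (μ k).sum} = {x : ℕ × ℕ × ℕ | x.1 = k ∧ InIdx n μ x} := by
        ext x
        constructor
        · rintro ⟨h1, h2, _⟩; exact ⟨h1, h2⟩
        · rintro ⟨h1, h2⟩
          have hxj : x.2.1 < (μ k).length := by rw [← h1]; exact h2.2.1
          have hxm : x.2.2 < (μ k).getD x.2.1 0 := by rw [← h1]; exact h2.2.2
          exact ⟨h1, h2, ((hσ k hk).entry_mem x.2.1 x.2.2 hxj hxm).2⟩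
      rw [hfull]
    · intro d hd
      rw [hFdef, SpringerAux.finrank_span_ncard hv hfin (fun x hx => hx.2.1)]
      exact SpringerAux.ncard_Sk hσ hk hd
  -- Part 2
  have part2 : ∀ k < n, ∀ d, Submodule.map e0 (F k (d + 1)) ≤ F k d := by
    intro k hk d
    rw [hFdef, hFdef, Submodule.map_span, Submodule.span_le]
    rintro _ ⟨_, ⟨x, hx, rfl⟩, rfl⟩
    obtain ⟨hx1, hxI, hxd⟩ := hx
    rcases Nat.eq_zero_or_pos x.2.2 with h | h
    · rw [SpringerAux.e0_zero hrep hxI h]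
      exact Submodule.zero_mem _
    · obtain ⟨hfI, hfd, hflt, hfe⟩ := SpringerAux.e0_step hrep hσ hxI h
      rw [hfe]
      refine Submodule.subset_span ⟨(x.1, x.2.1, x.2.2 - 1), ⟨hx1, hfI, ?_⟩, rfl⟩
      show σ k x.2.1 (x.2.2 - 1) ≤ d
      rw [hx1] at hflt
      have hxd' : σ k x.2.1 x.2.2 ≤ d + 1 := hxd
      omega
  -- Part 3
  have part3 : ∀ k < n, ∀ p : ℕ,
      Module.finrank 𝕜 ↥(Vsub k ⊓ LinearMap.ker (e0 ^ p)) =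
        ∑ j ∈ Finset.range (μ k).length, min p ((μ k).getD j 0) := by
    intro k hk p
    have hker := SpringerAux.span_inf_ker (v := v)
      (I := {x : ℕ × ℕ × ℕ | InIdx n μ x}) (e := e0)
      (δ := fun x : ℕ × ℕ × ℕ => x.2.2)
      (f := fun x : ℕ × ℕ × ℕ => (x.1, x.2.1, x.2.2 - 1))
      (A := {x : ℕ × ℕ × ℕ | x.1 = k ∧ InIdx n μ x}) hv (fun x hx => hx.2)
      (fun x hx h => SpringerAux.e0_zero hrep hx.2 h)
      (fun x hx h => by
        obtain ⟨hfI, hfd, _, hfe⟩ := SpringerAux.e0_step hrep hσ hx.2 h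
        exact ⟨⟨hx.1, hfI⟩, hfd, hfe⟩)
      (fun x _ y _ hdx hdy h => SpringerAux.e0_inj hdx hdy h) p
    rw [hVsub, ← hker,
      SpringerAux.finrank_span_ncard hv hfin (fun x hx => hx.1.2)]
    exact SpringerAux.ncard_Ak_cols hk p
  -- Part 4
  have part4 : ∀ k < n, ∀ d ≤ (μ k).sum, ∀ p : ℕ,
      Module.finrank 𝕜 ↥(F k d ⊓ LinearMap.ker (e0 ^ p)) =
        entriesInCols (μ k) (σ k) d p := by
    intro k hk d _ p
    have hker := SpringerAux.span_inf_ker (v := v)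
      (I := {x : ℕ × ℕ × ℕ | InIdx n μ x}) (e := e0)
      (δ := fun x : ℕ × ℕ × ℕ => x.2.2)
      (f := fun x : ℕ × ℕ × ℕ => (x.1, x.2.1, x.2.2 - 1))
      (A := {x : ℕ × ℕ × ℕ | x.1 = k ∧ InIdx n μ x ∧ σ k x.2.1 x.2.2 ≤ d}) hv
      (fun x hx => hx.2.1)
      (fun x hx h => SpringerAux.e0_zero hrep hx.2.1 h)
      (fun x hx h => by
        obtain ⟨hfI, hfd, hflt, hfe⟩ := SpringerAux.e0_step hrep hσ hx.2.1 h
        refine ⟨⟨hx.1, hfI, ?_⟩, hfd, hfe⟩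
        show σ k x.2.1 (x.2.2 - 1) ≤ d
        have hflt' := hflt
        rw [hx.1] at hflt'
        have hxd' : σ k x.2.1 x.2.2 ≤ d := hx.2.2
        omega)
      (fun x _ y _ hdx hdy h => SpringerAux.e0_inj hdx hdy h) p
    rw [hFdef, ← hker,
      SpringerAux.finrank_span_ncard hv hfin (fun x hx => hx.1.2.1)]
    exact SpringerAux.ncard_Sk_cols hσ hk d p
  -- the LS flag as a span
  have hspan : ∀ i, LSflag n (fun k => (μ k).sum) Vsub F i =
      Submodule.span 𝕜 (v '' {x : ℕ × ℕ × ℕ | InIdx n μ x ∧ SpringerAux.gval μ σ x ≤ i}) :=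
    fun i => SpringerAux.LSflag_span v hσ Vsub F hVsub hFdef i
  -- Part 5
  have part5 : IsFullFlag (∑ k ∈ Finset.range n, (μ k).sum)
      (LSflag n (fun k => (μ k).sum) Vsub F) := by
    constructor
    · intro a b hab
      rw [hspan a, hspan b]
      exact Submodule.span_mono (Set.image_mono fun x hx => ⟨hx.1, le_trans hx.2 hab⟩)
    · rw [hspan 0]
      have hempty : {x : ℕ × ℕ × ℕ | InIdx n μ x ∧ SpringerAux.gval μ σ x ≤ 0} = ∅ := by
        ext x
        simp only [Set.mem_setOf_eq, Set.mem_empty_iff_false, iff_false]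
        rintro ⟨hxI, hg⟩
        have := (SpringerAux.gval_bounds hσ hxI).1
        omega
      rw [hempty, Set.image_empty, Submodule.span_empty]
    · rw [hspan]
      have hall : {x : ℕ × ℕ × ℕ | InIdx n μ x ∧
          SpringerAux.gval μ σ x ≤ ∑ k ∈ Finset.range n, (μ k).sum} =
          {x : ℕ × ℕ × ℕ | InIdx n μ x} := by
        ext x
        constructor
        · exact fun h => h.1
        · intro hxI
          refine ⟨hxI, ?_⟩
          have h1 := (SpringerAux.gval_bounds hσ hxI).2
          have h2 : shift μ (x.1 + 1) ≤ shift μ n :=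
            SpringerAux.shift_mono μ (by have := hxI.1; omega)
          have h3 : shift μ n = ∑ k ∈ Finset.range n, (μ k).sum := rfl
          omega
      rw [hall]
      exact hrep.spans
    · intro i hi
      rw [hspan i, SpringerAux.finrank_span_ncard hv hfin (fun x hx => hx.1)]
      exact SpringerAux.ncard_Sbar hσ hi
  -- Part 6
  have part6 : ∀ i, Submodule.map (e0 + e1)
      (LSflag n (fun k => (μ k).sum) Vsub F (i + 1)) ≤
      LSflag n (fun k => (μ k).sum) Vsub F i := by
    intro i
    rw [hspan (i + 1), hspan i, Submodule.map_span, Submodule.span_le]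
    rintro _ ⟨_, ⟨x, hx, rfl⟩, rfl⟩
    rcases Nat.eq_zero_or_pos (SpringerAux.dep μ x) with h | h
    · rw [SpringerAux.e_zero hrep hx.1 h]
      exact Submodule.zero_mem _
    · obtain ⟨hfI, _, hfg, hfe⟩ := SpringerAux.e_step hrep hσ hx.1 h
      rw [hfe]
      refine Submodule.subset_span ⟨SpringerAux.fstep μ x, ⟨hfI, ?_⟩, rfl⟩
      have := hx.2
      omega
  -- Part 7
  have part7 : ∀ i ≤ ∑ k ∈ Finset.range n, (μ k).sum, ∀ p : ℕ,
      Module.finrank 𝕜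
        ↥(LSflag n (fun k => (μ k).sum) Vsub F i ⊓ LinearMap.ker ((e0 + e1) ^ p)) =
      entriesInCols (sumShape n μ) (stkEntry n μ σ) i p := by
    intro i _ p
    have hker := SpringerAux.span_inf_ker (v := v)
      (I := {x : ℕ × ℕ × ℕ | InIdx n μ x}) (e := e0 + e1)
      (δ := SpringerAux.dep μ) (f := SpringerAux.fstep μ)
      (A := {x : ℕ × ℕ × ℕ | InIdx n μ x ∧ SpringerAux.gval μ σ x ≤ i}) hv (fun x hx => hx.1)
      (fun x hx h => SpringerAux.e_zero hrep hx.1 h)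
      (fun x hx h => by
        obtain ⟨hfI, hfd, hfg, hfe⟩ := SpringerAux.e_step hrep hσ hx.1 h
        exact ⟨⟨hfI, by have := hx.2; omega⟩, hfd, hfe⟩)
      (fun x hx y hy hdx hdy h => SpringerAux.fstep_injOn hx.1 hy.1 hdx hdy h) p
    rw [hspan i, ← hker,
      SpringerAux.finrank_span_ncard hv hfin (fun x hx => hx.1.1)]
    exact SpringerAux.ncard_Sbar_cols hσ i p
  exact ⟨part1, part2, part3, part4, part5, part6, part7⟩
end

section
/- Let V be a finite-dimensional vector space over a field 𝕜, let e be a nilpotent endomorphism of V, and let H ⊆ V be a subspace of codimension 1 with e(H) ⊆ H. Let j ≥ 1 be maximal such that ker(e^{j-1}) ⊆ H (such a maximal j exists, since ker(e^0) = 0 ⊆ H while ker(e^p) = V ⊄ H for p large). Then for every p ≥ 0: dim ker((e|_H)^p) = dim ker(e^p) − 1 if p ≥ j, and dim ker((e|_H)^p) = dim ker(e^p) if p < j. (Equivalently, the Jordan type of e|_H is obtained from the Jordan type of e by removing the last box of column j of its Young diagram.) -/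
/-- Let `e` be a nilpotent endomorphism of a finite-dimensional space `V`
and `H` an `e`-stable hyperplane (codimension 1). If `j ≥ 1` is maximal with
`ker(e^{j-1}) ⊆ H`, then `dim ker((e|_H)^p) = dim ker(e^p) - 1` for `p ≥ j` and
`dim ker((e|_H)^p) = dim ker(e^p)` for `p < j` (the Jordan type of `e|_H` is obtained from
that of `e` by removing the last box of column `j`). -/
theorem hyperplane_restriction_jordan_type
    {𝕜 V : Type*} [Field 𝕜] [AddCommGroup V] [Module 𝕜 V] [FiniteDimensional 𝕜 V]
    (e : V →ₗ[𝕜] V) (henil : IsNilpotent e)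
    (H : Submodule 𝕜 V) (hcodim : Module.finrank 𝕜 ↥H + 1 = Module.finrank 𝕜 V)
    (hstab : ∀ x ∈ H, e x ∈ H)
    (j : ℕ) (hj : 1 ≤ j)
    (hker : LinearMap.ker (e ^ (j - 1)) ≤ H)
    (hmax : ¬ LinearMap.ker (e ^ j) ≤ H) :
    ∀ p : ℕ,
      (j ≤ p → Module.finrank 𝕜 ↥(LinearMap.ker ((e.restrict hstab) ^ p)) + 1 =
        Module.finrank 𝕜 ↥(LinearMap.ker (e ^ p))) ∧
      (p < j → Module.finrank 𝕜 ↥(LinearMap.ker ((e.restrict hstab) ^ p)) =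
        Module.finrank 𝕜 ↥(LinearMap.ker (e ^ p))) := by
  intro p
  have hkey : Module.finrank 𝕜 ↥(LinearMap.ker ((e.restrict hstab) ^ p)) =
      Module.finrank 𝕜 ↥(H ⊓ LinearMap.ker (e ^ p) : Submodule 𝕜 V) := by
    rw [Module.End.pow_restrict, LinearMap.ker_restrict]
    rw [← Submodule.map_comap_subtype]
    exact (Submodule.finrank_map_subtype_eq H _).symm
  constructor
  · intro hp
    -- ker e^p not contained in H
    have hle : LinearMap.ker (e ^ j) ≤ LinearMap.ker (e ^ p) := by
      intro x hx
      simp only [LinearMap.mem_ker] at hx ⊢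
      obtain ⟨q, rfl⟩ := Nat.exists_eq_add_of_le hp
      rw [add_comm, pow_add, Module.End.mul_apply, hx, map_zero]
    have hnle : ¬ LinearMap.ker (e ^ p) ≤ H := fun h => hmax (hle.trans h)
    set W := LinearMap.ker (e ^ p)
    have hsup : W ⊔ H = ⊤ := by
      have h1 : H < W ⊔ H := by
        rw [lt_iff_le_and_ne]
        refine ⟨le_sup_right, fun h => hnle (h ▸ le_sup_left)⟩
      have h2 : Module.finrank 𝕜 ↥H < Module.finrank 𝕜 ↥(W ⊔ H) :=
        Submodule.finrank_lt_finrank_of_lt h1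
      apply Submodule.eq_top_of_finrank_eq
      have h3 : Module.finrank 𝕜 ↥(W ⊔ H) ≤ Module.finrank 𝕜 V :=
        Submodule.finrank_le _
      omega
    have := Submodule.finrank_sup_add_finrank_inf_eq W H
    rw [hsup, finrank_top] at this
    rw [hkey, inf_comm]
    omega
  · intro hp
    have hle : LinearMap.ker (e ^ p) ≤ H := by
      refine le_trans ?_ hker
      intro x hx
      simp only [LinearMap.mem_ker] at hx ⊢
      obtain ⟨q, hq⟩ := Nat.exists_eq_add_of_le (Nat.le_sub_one_of_lt hp)
      rw [hq, add_comm, pow_add, Module.End.mul_apply, hx, map_zero]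
    rw [hkey, inf_eq_right.mpr hle]
end
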